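/- arXiv:1511.01775 — 3 statements merged into one kernel-verified Lean document; each statement's English description precedes it below -/
import Mathlib

section
/- Let A = k[h^{±1}](σ, h^d − 1) with σ(h) = qh, q^d ≠ 1. The assignment φ(x) = u, φ(y) = (v^d − 1)u^{-1}, φ(h) = v defines an injective k-algebra homomorphism from A into the quantum torus T_q = k⟨u^{±1}, v^{±1} : uv = qvu⟩. -/
/-- Relations defining the generalized Weyl algebra `k[h^{±1}](σ, h^d − 1)` with
`σ(h) = qh`: generators `h = ι 0`, `h⁻¹ = ι 1`, `x = ι 2`, `y = ι 3`. -/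
inductive GWARel (k : Type*) [Field k] (q : k) (d : ℕ) :
    FreeAlgebra k (Fin 4) → FreeAlgebra k (Fin 4) → Prop
  | hh : GWARel k q d (FreeAlgebra.ι k 0 * FreeAlgebra.ι k 1) 1
  | hh' : GWARel k q d (FreeAlgebra.ι k 1 * FreeAlgebra.ι k 0) 1
  | xh : GWARel k q d (FreeAlgebra.ι k 2 * FreeAlgebra.ι k 0)
      (q • (FreeAlgebra.ι k 0 * FreeAlgebra.ι k 2))
  | yh : GWARel k q d (FreeAlgebra.ι k 3 * FreeAlgebra.ι k 0)
      (q⁻¹ • (FreeAlgebra.ι k 0 * FreeAlgebra.ι k 3))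
  | xy : GWARel k q d (FreeAlgebra.ι k 2 * FreeAlgebra.ι k 3)
      (q ^ d • FreeAlgebra.ι k 0 ^ d - 1)
  | yx : GWARel k q d (FreeAlgebra.ι k 3 * FreeAlgebra.ι k 2)
      (FreeAlgebra.ι k 0 ^ d - 1)

/-- The generalized Weyl algebra `A(d,q) = k[h^{±1}](σ, h^d − 1)`. -/
abbrev GWA (k : Type*) [Field k] (q : k) (d : ℕ) := RingQuot (GWARel k q d)

variable (k : Type*) [Field k] (q : k) (d : ℕ)

noncomputable def hGen : GWA k q d := RingQuot.mkAlgHom k (GWARel k q d) (FreeAlgebra.ι k 0)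
noncomputable def hInv : GWA k q d := RingQuot.mkAlgHom k (GWARel k q d) (FreeAlgebra.ι k 1)
noncomputable def xGen : GWA k q d := RingQuot.mkAlgHom k (GWARel k q d) (FreeAlgebra.ι k 2)
noncomputable def yGen : GWA k q d := RingQuot.mkAlgHom k (GWARel k q d) (FreeAlgebra.ι k 3)

/-- `h^m` for an integer `m`, via `h` and `h⁻¹`. -/
noncomputable def hZPow (m : ℤ) : GWA k q d :=
  if 0 ≤ m then hGen k q d ^ m.toNat else hInv k q d ^ (-m).toNat

/-- Relations defining the quantum torus `T_q = k⟨u^{±1}, v^{±1}⟩` with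
`uv = q vu`: generators `u = ι 0`, `u⁻¹ = ι 1`, `v = ι 2`, `v⁻¹ = ι 3`. -/
inductive TorusRel (k : Type*) [Field k] (q : k) :
    FreeAlgebra k (Fin 4) → FreeAlgebra k (Fin 4) → Prop
  | uu : TorusRel k q (FreeAlgebra.ι k 0 * FreeAlgebra.ι k 1) 1
  | uu' : TorusRel k q (FreeAlgebra.ι k 1 * FreeAlgebra.ι k 0) 1
  | vv : TorusRel k q (FreeAlgebra.ι k 2 * FreeAlgebra.ι k 3) 1
  | vv' : TorusRel k q (FreeAlgebra.ι k 3 * FreeAlgebra.ι k 2) 1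
  | uv : TorusRel k q (FreeAlgebra.ι k 0 * FreeAlgebra.ι k 2)
      (q • (FreeAlgebra.ι k 2 * FreeAlgebra.ι k 0))

/-- The quantum torus. -/
abbrev QTorus (k : Type*) [Field k] (q : k) := RingQuot (TorusRel k q)

variable (k : Type*) [Field k] (q : k)

noncomputable def uGen : QTorus k q := RingQuot.mkAlgHom k (TorusRel k q) (FreeAlgebra.ι k 0)
noncomputable def uInv : QTorus k q := RingQuot.mkAlgHom k (TorusRel k q) (FreeAlgebra.ι k 1)
noncomputable def vGen : QTorus k q := RingQuot.mkAlgHom k (TorusRel k q) (FreeAlgebra.ι k 2)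
noncomputable def vInv : QTorus k q := RingQuot.mkAlgHom k (TorusRel k q) (FreeAlgebra.ι k 3)

/-- `u^r` for an integer `r`. -/
noncomputable def uZPow (r : ℤ) : QTorus k q :=
  if 0 ≤ r then uGen k q ^ r.toNat else uInv k q ^ (-r).toNat

/-- `v^m` for an integer `m`. -/
noncomputable def vZPow (m : ℤ) : QTorus k q :=
  if 0 ≤ m then vGen k q ^ m.toNat else vInv k q ^ (-m).toNat

namespace Stmt9

variable {k : Type*} [Field k] {q : k} {d : ℕ}

section TorusLemmas

lemma t_rel {a b : FreeAlgebra k (Fin 4)} (h : TorusRel k q a b) :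
    RingQuot.mkAlgHom k (TorusRel k q) a = RingQuot.mkAlgHom k (TorusRel k q) b :=
  RingQuot.mkAlgHom_rel k h

lemma u_ui : uGen k q * uInv k q = 1 := by
  simpa [map_mul, map_one, uGen, uInv] using t_rel (q := q) (k := k) TorusRel.uu

lemma ui_u : uInv k q * uGen k q = 1 := by
  simpa [map_mul, map_one, uGen, uInv] using t_rel (q := q) (k := k) TorusRel.uu'

lemma v_vi : vGen k q * vInv k q = 1 := by
  simpa [map_mul, map_one, vGen, vInv] using t_rel (q := q) (k := k) TorusRel.vv

lemma vi_v : vInv k q * vGen k q = 1 := by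
  simpa [map_mul, map_one, vGen, vInv] using t_rel (q := q) (k := k) TorusRel.vv'

lemma u_v : uGen k q * vGen k q = q • (vGen k q * uGen k q) := by
  simpa [map_mul, map_smul, uGen, vGen] using t_rel (q := q) (k := k) TorusRel.uv

lemma u_ui' (z : QTorus k q) : uGen k q * (uInv k q * z) = z := by
  rw [← mul_assoc, u_ui, one_mul]

lemma ui_u' (z : QTorus k q) : uInv k q * (uGen k q * z) = z := by
  rw [← mul_assoc, ui_u, one_mul]

lemma ui_v (hq0 : q ≠ 0) :
    uInv k q * vGen k q = q⁻¹ • (vGen k q * uInv k q) := by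
  have h1 : uInv k q * (uGen k q * vGen k q) * uInv k q
      = uInv k q * (q • (vGen k q * uGen k q)) * uInv k q := by rw [u_v]
  rw [← mul_assoc, ui_u, one_mul] at h1
  rw [mul_smul_comm, smul_mul_assoc, mul_assoc, mul_assoc, u_ui, mul_one] at h1
  rw [h1, smul_smul, inv_mul_cancel₀ hq0, one_smul]

lemma u_vpow (t : ℕ) : uGen k q * vGen k q ^ t = q ^ t • (vGen k q ^ t * uGen k q) := by
  induction t with
  | zero => simp
  | succ n ih =>
    rw [pow_succ, ← mul_assoc, ih, smul_mul_assoc, mul_assoc, u_v, mul_smul_comm,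
      smul_smul, ← mul_assoc, ← pow_succ q, ← pow_succ (vGen k q)]

end TorusLemmas

/-- The free-algebra lift defining φ. -/
noncomputable def Fphi (k : Type*) [Field k] (q : k) (d : ℕ) :
    FreeAlgebra k (Fin 4) →ₐ[k] QTorus k q :=
  FreeAlgebra.lift k ![vGen k q, vInv k q, uGen k q, (vGen k q ^ d - 1) * uInv k q]

lemma Fphi_rel (hq0 : q ≠ 0) : ∀ ⦃a b : FreeAlgebra k (Fin 4)⦄,
    GWARel k q d a b → Fphi k q d a = Fphi k q d b := by
  intro a b r
  cases r with
  | hh => simp [Fphi, v_vi]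
  | hh' => simp [Fphi, vi_v]
  | xh => simp [Fphi, u_v]
  | yh =>
    simp only [Fphi, map_mul, map_smul, FreeAlgebra.lift_ι_apply]
    show (vGen k q ^ d - 1) * uInv k q * vGen k q
      = q⁻¹ • (vGen k q * ((vGen k q ^ d - 1) * uInv k q))
    simp only [sub_mul, one_mul]
    rw [mul_sub, mul_assoc (vGen k q ^ d), ui_v hq0, mul_smul_comm, smul_sub,
      ← mul_assoc, ← mul_assoc, ← pow_succ, ← pow_succ']
  | xy =>
    simp only [Fphi, map_mul, map_smul, map_sub, map_pow, map_one, FreeAlgebra.lift_ι_apply]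
    show uGen k q * ((vGen k q ^ d - 1) * uInv k q) = q ^ d • vGen k q ^ d - 1
    rw [sub_mul, one_mul, mul_sub, u_ui, ← mul_assoc, u_vpow, smul_mul_assoc,
      mul_assoc, u_ui, mul_one]
  | yx =>
    simp only [Fphi, map_mul, map_sub, map_pow, map_one, FreeAlgebra.lift_ι_apply]
    show (vGen k q ^ d - 1) * uInv k q * uGen k q = vGen k q ^ d - 1
    rw [mul_assoc, ui_u, mul_one]

/-- The algebra map φ : GWA → QTorus. -/
noncomputable def phi (k : Type*) [Field k] (q : k) (d : ℕ) (hq0 : q ≠ 0) :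
    GWA k q d →ₐ[k] QTorus k q :=
  RingQuot.liftAlgHom k ⟨Fphi k q d, Fphi_rel hq0⟩

lemma phi_h (hq0 : q ≠ 0) : phi k q d hq0 (hGen k q d) = vGen k q := by
  simp [phi, hGen, RingQuot.liftAlgHom_mkAlgHom_apply, Fphi, FreeAlgebra.lift_ι_apply]

lemma phi_hi (hq0 : q ≠ 0) : phi k q d hq0 (hInv k q d) = vInv k q := by
  simp [phi, hInv, RingQuot.liftAlgHom_mkAlgHom_apply, Fphi, FreeAlgebra.lift_ι_apply]

lemma phi_x (hq0 : q ≠ 0) : phi k q d hq0 (xGen k q d) = uGen k q := by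
  simp [phi, xGen, RingQuot.liftAlgHom_mkAlgHom_apply, Fphi, FreeAlgebra.lift_ι_apply]

lemma phi_y (hq0 : q ≠ 0) :
    phi k q d hq0 (yGen k q d) = (vGen k q ^ d - 1) * uInv k q := by
  simp [phi, yGen, RingQuot.liftAlgHom_mkAlgHom_apply, Fphi, FreeAlgebra.lift_ι_apply]

end Stmt9
namespace Stmt9

variable {k : Type*} [Field k] {q : k} {d : ℕ}

section GWALemmas

lemma g_rel {a b : FreeAlgebra k (Fin 4)} (h : GWARel k q d a b) :
    RingQuot.mkAlgHom k (GWARel k q d) a = RingQuot.mkAlgHom k (GWARel k q d) b :=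
  RingQuot.mkAlgHom_rel k h

lemma h_hi : hGen k q d * hInv k q d = 1 := by
  simpa [map_mul, map_one, hGen, hInv] using g_rel (q := q) (k := k) (d := d) GWARel.hh

lemma hi_h : hInv k q d * hGen k q d = 1 := by
  simpa [map_mul, map_one, hGen, hInv] using g_rel (q := q) (k := k) (d := d) GWARel.hh'

lemma x_h : xGen k q d * hGen k q d = q • (hGen k q d * xGen k q d) := by
  simpa [map_mul, map_smul, xGen, hGen] using g_rel (q := q) (k := k) (d := d) GWARel.xh

lemma y_h : yGen k q d * hGen k q d = q⁻¹ • (hGen k q d * yGen k q d) := by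
  simpa [map_mul, map_smul, yGen, hGen] using g_rel (q := q) (k := k) (d := d) GWARel.yh

lemma x_y : xGen k q d * yGen k q d = q ^ d • hGen k q d ^ d - 1 := by
  simpa [map_mul, map_smul, map_sub, map_pow, map_one, xGen, yGen, hGen] using
    g_rel (q := q) (k := k) (d := d) GWARel.xy

lemma y_x : yGen k q d * xGen k q d = hGen k q d ^ d - 1 := by
  simpa [map_mul, map_sub, map_pow, map_one, xGen, yGen, hGen] using
    g_rel (q := q) (k := k) (d := d) GWARel.yx

lemma x_hi (hq0 : q ≠ 0) :
    xGen k q d * hInv k q d = q⁻¹ • (hInv k q d * xGen k q d) := by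
  have h1 : hInv k q d * (xGen k q d * hGen k q d) * hInv k q d
      = hInv k q d * (q • (hGen k q d * xGen k q d)) * hInv k q d := by rw [x_h]
  rw [mul_assoc, mul_assoc, h_hi, mul_one] at h1
  rw [mul_smul_comm, smul_mul_assoc, ← mul_assoc, hi_h, one_mul] at h1
  rw [h1, smul_smul, inv_mul_cancel₀ hq0, one_smul]

lemma y_hi (hq0 : q ≠ 0) :
    yGen k q d * hInv k q d = q • (hInv k q d * yGen k q d) := by
  have h1 : hInv k q d * (yGen k q d * hGen k q d) * hInv k q d
      = hInv k q d * (q⁻¹ • (hGen k q d * yGen k q d)) * hInv k q d := by rw [y_h]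
  rw [mul_assoc, mul_assoc, h_hi, mul_one] at h1
  rw [mul_smul_comm, smul_mul_assoc, ← mul_assoc, hi_h, one_mul] at h1
  rw [h1, smul_smul, mul_inv_cancel₀ hq0, one_smul]

/-- `h` as a unit of the GWA. -/
noncomputable def hu (k : Type*) [Field k] (q : k) (d : ℕ) : (GWA k q d)ˣ :=
  ⟨hGen k q d, hInv k q d, h_hi, hi_h⟩

lemma hZPow_eq (m : ℤ) : hZPow k q d m = ((hu k q d ^ m : (GWA k q d)ˣ) : GWA k q d) := by
  rcases le_or_gt 0 m with hm | hm
  · obtain ⟨n, rfl⟩ : ∃ n : ℕ, m = (n : ℤ) := ⟨m.toNat, by omega⟩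
    rw [hZPow, if_pos hm, zpow_natCast, Units.val_pow_eq_pow_val, Int.toNat_natCast]
    rfl
  · obtain ⟨n, rfl⟩ : ∃ n : ℕ, m = -(n : ℤ) := ⟨(-m).toNat, by omega⟩
    rw [hZPow, if_neg (by omega), zpow_neg, zpow_natCast, ← inv_pow,
      Units.val_pow_eq_pow_val, neg_neg, Int.toNat_natCast]
    rfl

lemma hZPow_add (m m' : ℤ) :
    hZPow k q d (m + m') = hZPow k q d m * hZPow k q d m' := by
  rw [hZPow_eq, hZPow_eq, hZPow_eq, zpow_add, Units.val_mul]

lemma h_mul_hZPow (m : ℤ) : hGen k q d * hZPow k q d m = hZPow k q d (m + 1) := by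
  have h1 : hGen k q d = hZPow k q d 1 := by
    rw [hZPow_eq, zpow_one]; rfl
  rw [add_comm, hZPow_add, ← h1]

lemma hi_mul_hZPow (m : ℤ) : hInv k q d * hZPow k q d m = hZPow k q d (m - 1) := by
  have h1 : hInv k q d = hZPow k q d (-1) := by
    rw [hZPow_eq, zpow_neg, zpow_one]; rfl
  rw [sub_eq_add_neg, add_comm, hZPow_add, ← h1]

lemma hZPow_d : hZPow k q d (d : ℤ) = hGen k q d ^ d := by
  rw [hZPow, if_pos (by positivity), Int.toNat_natCast]

lemma x_hpow (t : ℕ) :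
    xGen k q d * hGen k q d ^ t = q ^ t • (hGen k q d ^ t * xGen k q d) := by
  induction t with
  | zero => simp
  | succ n ih =>
    rw [pow_succ, ← mul_assoc, ih, smul_mul_assoc, mul_assoc, x_h, mul_smul_comm,
      smul_smul, ← mul_assoc, ← pow_succ q, ← pow_succ (hGen k q d)]

lemma x_hipow (hq0 : q ≠ 0) (t : ℕ) :
    xGen k q d * hInv k q d ^ t = (q⁻¹) ^ t • (hInv k q d ^ t * xGen k q d) := by
  induction t with
  | zero => simp
  | succ n ih =>
    rw [pow_succ, ← mul_assoc, ih, smul_mul_assoc, mul_assoc, x_hi hq0, mul_smul_comm,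
      smul_smul, ← mul_assoc, ← pow_succ q⁻¹, ← pow_succ (hInv k q d)]

lemma y_hpow (t : ℕ) :
    yGen k q d * hGen k q d ^ t = (q⁻¹) ^ t • (hGen k q d ^ t * yGen k q d) := by
  induction t with
  | zero => simp
  | succ n ih =>
    rw [pow_succ, ← mul_assoc, ih, smul_mul_assoc, mul_assoc, y_h, mul_smul_comm,
      smul_smul, ← mul_assoc, ← pow_succ q⁻¹, ← pow_succ (hGen k q d)]

lemma y_hipow (hq0 : q ≠ 0) (t : ℕ) :
    yGen k q d * hInv k q d ^ t = q ^ t • (hInv k q d ^ t * yGen k q d) := by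
  induction t with
  | zero => simp
  | succ n ih =>
    rw [pow_succ, ← mul_assoc, ih, smul_mul_assoc, mul_assoc, y_hi hq0, mul_smul_comm,
      smul_smul, ← mul_assoc, ← pow_succ q, ← pow_succ (hInv k q d)]

lemma x_hZPow (hq0 : q ≠ 0) (m : ℤ) :
    xGen k q d * hZPow k q d m = q ^ m • (hZPow k q d m * xGen k q d) := by
  rcases le_or_gt 0 m with hm | hm
  · obtain ⟨n, rfl⟩ : ∃ n : ℕ, m = (n : ℤ) := ⟨m.toNat, by omega⟩
    rw [hZPow, if_pos hm, Int.toNat_natCast, x_hpow, zpow_natCast]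
  · obtain ⟨n, rfl⟩ : ∃ n : ℕ, m = -(n : ℤ) := ⟨(-m).toNat, by omega⟩
    rw [hZPow, if_neg (by omega), neg_neg, Int.toNat_natCast, x_hipow hq0,
      zpow_neg, zpow_natCast, inv_pow]

lemma y_hZPow (hq0 : q ≠ 0) (m : ℤ) :
    yGen k q d * hZPow k q d m = q ^ (-m) • (hZPow k q d m * yGen k q d) := by
  rcases le_or_gt 0 m with hm | hm
  · obtain ⟨n, rfl⟩ : ∃ n : ℕ, m = (n : ℤ) := ⟨m.toNat, by omega⟩
    rw [hZPow, if_pos hm, Int.toNat_natCast, y_hpow, zpow_neg, zpow_natCast, inv_pow]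
  · obtain ⟨n, rfl⟩ : ∃ n : ℕ, m = -(n : ℤ) := ⟨(-m).toNat, by omega⟩
    rw [hZPow, if_neg (by omega), neg_neg, Int.toNat_natCast, y_hipow hq0]
    norm_num

/-- Normal-form monomials spanning the GWA. -/
noncomputable def MM (k : Type*) [Field k] (q : k) (d : ℕ) (p : ℤ × ℤ) : GWA k q d :=
  hZPow k q d p.1 * (if 0 ≤ p.2 then xGen k q d ^ p.2.toNat else yGen k q d ^ (-p.2).toNat)

lemma MM_x (m : ℤ) (t : ℕ) :
    MM k q d (m, (t : ℤ)) = hZPow k q d m * xGen k q d ^ t := by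
  simp [MM]

lemma MM_y (m : ℤ) (t : ℕ) :
    MM k q d (m, -(t : ℤ)) = hZPow k q d m * yGen k q d ^ t := by
  rcases Nat.eq_zero_or_pos t with rfl | ht
  · simp [MM]
  · rw [MM, if_neg (by omega)]
    simp

lemma MM_one : MM k q d (0, 0) = 1 := by
  have : hZPow k q d 0 = 1 := by simp [hZPow]
  simp [MM, this]

end GWALemmas
end Stmt9
namespace Stmt9

variable {k : Type*} [Field k] {q : k} {d : ℕ}

section Span

/-- The span of the normal-form monomials. -/
noncomputable def SpM (k : Type*) [Field k] (q : k) (d : ℕ) : Submodule k (GWA k q d) :=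
  Submodule.span k (Set.range (MM k q d))

lemma MM_mem (p : ℤ × ℤ) : MM k q d p ∈ SpM k q d :=
  Submodule.subset_span ⟨p, rfl⟩

lemma h_mul_MM (p : ℤ × ℤ) : hGen k q d * MM k q d p = MM k q d (p.1 + 1, p.2) := by
  rw [MM, MM, ← mul_assoc, h_mul_hZPow]

lemma hi_mul_MM (p : ℤ × ℤ) : hInv k q d * MM k q d p = MM k q d (p.1 - 1, p.2) := by
  rw [MM, MM, ← mul_assoc, hi_mul_hZPow]

lemma x_mul_MM (hq0 : q ≠ 0) (m n : ℤ) :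
    xGen k q d * MM k q d (m, n) ∈ SpM k q d := by
  rcases le_or_gt 0 n with hn | hn
  · obtain ⟨t, rfl⟩ : ∃ t : ℕ, n = (t : ℤ) := ⟨n.toNat, by omega⟩
    have : xGen k q d * MM k q d (m, (t : ℤ))
        = q ^ m • MM k q d (m, ((t + 1 : ℕ) : ℤ)) := by
      rw [MM_x, MM_x, ← mul_assoc, x_hZPow hq0, smul_mul_assoc, mul_assoc, ← pow_succ']
    rw [this]
    exact Submodule.smul_mem _ _ (MM_mem _)
  · obtain ⟨t, rfl⟩ : ∃ t : ℕ, n = -((t + 1 : ℕ) : ℤ) := ⟨(-n).toNat - 1, by omega⟩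
    have hxy : xGen k q d * yGen k q d ^ (t + 1)
        = q ^ d • (hGen k q d ^ d * yGen k q d ^ t) - yGen k q d ^ t := by
      rw [pow_succ', ← mul_assoc, x_y, sub_mul, one_mul, smul_mul_assoc]
    have : xGen k q d * MM k q d (m, -((t + 1 : ℕ) : ℤ))
        = q ^ m • (q ^ d • MM k q d (m + d, -(t : ℤ)) - MM k q d (m, -(t : ℤ))) := by
      rw [MM_y, MM_y, MM_y, ← mul_assoc, x_hZPow hq0, smul_mul_assoc, mul_assoc, hxy]
      rw [mul_sub, mul_smul_comm, ← mul_assoc, ← hZPow_d, ← hZPow_add]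
    rw [this]
    exact Submodule.smul_mem _ _ (Submodule.sub_mem _
      (Submodule.smul_mem _ _ (MM_mem _)) (MM_mem _))

lemma y_mul_MM (hq0 : q ≠ 0) (m n : ℤ) :
    yGen k q d * MM k q d (m, n) ∈ SpM k q d := by
  rcases le_or_gt n 0 with hn | hn
  · obtain ⟨t, rfl⟩ : ∃ t : ℕ, n = -(t : ℤ) := ⟨(-n).toNat, by omega⟩
    have : yGen k q d * MM k q d (m, -(t : ℤ))
        = q ^ (-m) • MM k q d (m, -((t + 1 : ℕ) : ℤ)) := by
      rw [MM_y, MM_y, ← mul_assoc, y_hZPow hq0, smul_mul_assoc, mul_assoc, ← pow_succ']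
    rw [this]
    exact Submodule.smul_mem _ _ (MM_mem _)
  · obtain ⟨t, rfl⟩ : ∃ t : ℕ, n = ((t + 1 : ℕ) : ℤ) := ⟨n.toNat - 1, by omega⟩
    have hyx : yGen k q d * xGen k q d ^ (t + 1)
        = hGen k q d ^ d * xGen k q d ^ t - xGen k q d ^ t := by
      rw [pow_succ', ← mul_assoc, y_x, sub_mul, one_mul]
    have : yGen k q d * MM k q d (m, ((t + 1 : ℕ) : ℤ))
        = q ^ (-m) • (MM k q d (m + d, (t : ℤ)) - MM k q d (m, (t : ℤ))) := by
      rw [MM_x, MM_x, MM_x, ← mul_assoc, y_hZPow hq0, smul_mul_assoc, mul_assoc, hyx]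
      rw [mul_sub, ← mul_assoc, ← hZPow_d, ← hZPow_add]
    rw [this]
    exact Submodule.smul_mem _ _ (Submodule.sub_mem _ (MM_mem _) (MM_mem _))

lemma stab {g : GWA k q d} (H : ∀ p, g * MM k q d p ∈ SpM k q d) :
    ∀ s ∈ SpM k q d, g * s ∈ SpM k q d := by
  intro s hs
  induction hs using Submodule.span_induction with
  | mem x hx => obtain ⟨p, rfl⟩ := hx; exact H p
  | zero => simp [Submodule.zero_mem]
  | add x y hx hy ihx ihy => rw [mul_add]; exact Submodule.add_mem _ ihx ihy
  | smul a x hx ihx => rw [mul_smul_comm]; exact Submodule.smul_mem _ _ ihx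

lemma mem_SpM (hq0 : q ≠ 0) (a : GWA k q d) : a ∈ SpM k q d := by
  obtain ⟨b, rfl⟩ := RingQuot.mkAlgHom_surjective k (GWARel k q d) a
  have key : ∀ s ∈ SpM k q d, RingQuot.mkAlgHom k (GWARel k q d) b * s ∈ SpM k q d := by
    induction b using FreeAlgebra.induction with
    | grade0 r =>
      intro s hs
      rw [AlgHom.commutes, ← Algebra.smul_def]
      exact Submodule.smul_mem _ _ hs
    | grade1 i =>
      fin_cases i
      · refine stab fun p => ?_
        show hGen k q d * MM k q d p ∈ SpM k q d
        rw [h_mul_MM]; exact MM_mem _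
      · refine stab fun p => ?_
        show hInv k q d * MM k q d p ∈ SpM k q d
        rw [hi_mul_MM]; exact MM_mem _
      · refine stab fun p => ?_
        show xGen k q d * MM k q d p ∈ SpM k q d
        rw [show p = (p.1, p.2) from rfl]
        exact x_mul_MM hq0 p.1 p.2
      · refine stab fun p => ?_
        show yGen k q d * MM k q d p ∈ SpM k q d
        rw [show p = (p.1, p.2) from rfl]
        exact y_mul_MM hq0 p.1 p.2
    | mul a b iha ihb =>
      intro s hs
      rw [map_mul, mul_assoc]
      exact iha _ (ihb _ hs)
    | add a b iha ihb =>
      intro s hs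
      rw [map_add, add_mul]
      exact Submodule.add_mem _ (iha _ hs) (ihb _ hs)
  have h1 := key 1 (MM_one (q := q) (d := d) ▸ MM_mem _)
  rwa [mul_one] at h1

end Span
end Stmt9
namespace Stmt9

variable {k : Type*} [Field k] {q : k} {d : ℕ}

section Rep

/-- The representation space. -/
abbrev Vsp (k : Type*) [Field k] : Type _ := (ℤ × ℤ) →₀ k

/-- A "weighted shift" operator on `Vsp`. -/
noncomputable def opT (k : Type*) [Field k] (e : (ℤ × ℤ) ≃ (ℤ × ℤ)) (c : ℤ × ℤ → k) :
    Vsp k →ₗ[k] Vsp k :=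
  Finsupp.lsum k fun p => c p • Finsupp.lsingle (e p)

lemma opT_single (e : (ℤ × ℤ) ≃ (ℤ × ℤ)) (c : ℤ × ℤ → k) (p : ℤ × ℤ) (b : k) :
    opT k e c (Finsupp.single p b) = Finsupp.single (e p) (c p * b) := by
  simp [opT, Finsupp.smul_single]

lemma opT_apply (e : (ℤ × ℤ) ≃ (ℤ × ℤ)) (c : ℤ × ℤ → k) (w : Vsp k) (x : ℤ × ℤ) :
    opT k e c w x = c (e.symm x) * w (e.symm x) := by
  induction w using Finsupp.induction_linear with
  | zero => simp
  | add f g hf hg => simp [map_add, Finsupp.add_apply, hf, hg, mul_add]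
  | single p b =>
    rw [opT_single]
    rcases eq_or_ne p (e.symm x) with h | h
    · subst h
      simp [Finsupp.single_apply]
    · rw [Finsupp.single_apply, if_neg, Finsupp.single_apply, if_neg (by
        exact fun hh => h (by rw [hh])), mul_zero]
      exact fun hh => h (by rw [← hh, Equiv.symm_apply_apply])

/-- Shift in the first coordinate. -/
def eU : (ℤ × ℤ) ≃ (ℤ × ℤ) := (Equiv.addRight (1 : ℤ)).prodCongr (Equiv.refl ℤ)
/-- Shift in the second coordinate. -/
def eV : (ℤ × ℤ) ≃ (ℤ × ℤ) := (Equiv.refl ℤ).prodCongr (Equiv.addRight (1 : ℤ))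

@[simp] lemma eU_apply (a b : ℤ) : eU (a, b) = (a + 1, b) := rfl
@[simp] lemma eU_symm_apply (a b : ℤ) : eU.symm (a, b) = (a - 1, b) := rfl
@[simp] lemma eV_apply (a b : ℤ) : eV (a, b) = (a, b + 1) := rfl
@[simp] lemma eV_symm_apply (a b : ℤ) : eV.symm (a, b) = (a, b - 1) := rfl

noncomputable def Uop (k : Type*) [Field k] (q : k) : Vsp k →ₗ[k] Vsp k :=
  opT k eU fun p => q ^ p.2
noncomputable def Uiop (k : Type*) [Field k] (q : k) : Vsp k →ₗ[k] Vsp k :=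
  opT k eU.symm fun p => q ^ (-p.2)
noncomputable def Vop (k : Type*) [Field k] : Vsp k →ₗ[k] Vsp k :=
  opT k eV fun _ => 1
noncomputable def Viop (k : Type*) [Field k] : Vsp k →ₗ[k] Vsp k :=
  opT k eV.symm fun _ => 1

lemma Uop_apply (w : Vsp k) (a b : ℤ) : Uop k q w (a, b) = q ^ b * w (a - 1, b) := by
  rw [Uop, opT_apply]; rfl

lemma Uiop_apply (w : Vsp k) (a b : ℤ) : Uiop k q w (a, b) = q ^ (-b) * w (a + 1, b) := by
  rw [Uiop, opT_apply]; simp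

lemma Vop_apply (w : Vsp k) (a b : ℤ) : Vop k w (a, b) = w (a, b - 1) := by
  rw [Vop, opT_apply]; simp

lemma Viop_apply (w : Vsp k) (a b : ℤ) : Viop k w (a, b) = w (a, b + 1) := by
  rw [Viop, opT_apply]; simp

lemma UUi (hq0 : q ≠ 0) : Uop k q * Uiop k q = (1 : Module.End k (Vsp k)) := by
  refine LinearMap.ext fun w => Finsupp.ext fun x => ?_
  obtain ⟨a, b⟩ := x
  rw [Module.End.mul_apply, Uop_apply, Uiop_apply, Module.End.one_apply]
  rw [← mul_assoc, ← zpow_add₀ hq0, add_neg_cancel, zpow_zero, one_mul, sub_add_cancel]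

lemma UiU (hq0 : q ≠ 0) : Uiop k q * Uop k q = (1 : Module.End k (Vsp k)) := by
  refine LinearMap.ext fun w => Finsupp.ext fun x => ?_
  obtain ⟨a, b⟩ := x
  rw [Module.End.mul_apply, Uiop_apply, Uop_apply, Module.End.one_apply]
  rw [← mul_assoc, ← zpow_add₀ hq0, neg_add_cancel, zpow_zero, one_mul, add_sub_cancel_right]

lemma VVi : Vop k * Viop k = (1 : Module.End k (Vsp k)) := by
  refine LinearMap.ext fun w => Finsupp.ext fun x => ?_
  obtain ⟨a, b⟩ := x
  rw [Module.End.mul_apply, Vop_apply, Viop_apply, Module.End.one_apply, sub_add_cancel]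

lemma ViV : Viop k * Vop k = (1 : Module.End k (Vsp k)) := by
  refine LinearMap.ext fun w => Finsupp.ext fun x => ?_
  obtain ⟨a, b⟩ := x
  rw [Module.End.mul_apply, Viop_apply, Vop_apply, Module.End.one_apply, add_sub_cancel_right]

lemma UV (hq0 : q ≠ 0) : Uop k q * Vop k = q • (Vop k * Uop k q) := by
  refine LinearMap.ext fun w => Finsupp.ext fun x => ?_
  obtain ⟨a, b⟩ := x
  rw [Module.End.mul_apply, Uop_apply, Vop_apply, LinearMap.smul_apply,
    Finsupp.smul_apply, Module.End.mul_apply, Vop_apply, Uop_apply, smul_eq_mul]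
  have : q * q ^ (b - 1) = q ^ b := by
    rw [← zpow_one_add₀ hq0]
    norm_num
  rw [← mul_assoc, this]

/-- The free-algebra lift defining the representation ρ. -/
noncomputable def Frho (k : Type*) [Field k] (q : k) :
    FreeAlgebra k (Fin 4) →ₐ[k] Module.End k (Vsp k) :=
  FreeAlgebra.lift k ![Uop k q, Uiop k q, Vop k, Viop k]

/-- The representation ρ of the quantum torus. -/
noncomputable def rho (k : Type*) [Field k] (q : k) (hq0 : q ≠ 0) :
    QTorus k q →ₐ[k] Module.End k (Vsp k) := by
  refine RingQuot.liftAlgHom k ⟨Frho k q, ?_⟩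
  intro a b r
  cases r with
  | uu => simpa [Frho, map_mul, map_one, FreeAlgebra.lift_ι_apply] using UUi hq0
  | uu' => simpa [Frho, map_mul, map_one, FreeAlgebra.lift_ι_apply] using UiU hq0
  | vv => simpa [Frho, map_mul, map_one, FreeAlgebra.lift_ι_apply] using VVi
  | vv' => simpa [Frho, map_mul, map_one, FreeAlgebra.lift_ι_apply] using ViV
  | uv => simpa [Frho, map_mul, map_smul, FreeAlgebra.lift_ι_apply] using UV hq0

lemma rho_u (hq0 : q ≠ 0) : rho k q hq0 (uGen k q) = Uop k q := by
  simp [rho, uGen, RingQuot.liftAlgHom_mkAlgHom_apply, Frho, FreeAlgebra.lift_ι_apply]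

lemma rho_ui (hq0 : q ≠ 0) : rho k q hq0 (uInv k q) = Uiop k q := by
  simp [rho, uInv, RingQuot.liftAlgHom_mkAlgHom_apply, Frho, FreeAlgebra.lift_ι_apply]

lemma rho_v (hq0 : q ≠ 0) : rho k q hq0 (vGen k q) = Vop k := by
  simp [rho, vGen, RingQuot.liftAlgHom_mkAlgHom_apply, Frho, FreeAlgebra.lift_ι_apply]

lemma rho_vi (hq0 : q ≠ 0) : rho k q hq0 (vInv k q) = Viop k := by
  simp [rho, vInv, RingQuot.liftAlgHom_mkAlgHom_apply, Frho, FreeAlgebra.lift_ι_apply]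

end Rep
end Stmt9
namespace Stmt9

variable {k : Type*} [Field k] {q : k} {d : ℕ}

section Comp

lemma vopow_apply (t : ℕ) (w : Vsp k) (a b : ℤ) :
    ((Vop k) ^ t) w (a, b) = w (a, b - t) := by
  induction t generalizing b with
  | zero => simp
  | succ n ih =>
    rw [pow_succ', Module.End.mul_apply]
    rw [Vop_apply]  -- wrong order? Vop^{n+1} = Vop * Vop^n : outer Vop
    rw [ih]
    congr 2
    push_cast
    ring

lemma vipow_apply (t : ℕ) (w : Vsp k) (a b : ℤ) :
    ((Viop k) ^ t) w (a, b) = w (a, b + t) := by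
  induction t generalizing b with
  | zero => simp
  | succ n ih =>
    rw [pow_succ', Module.End.mul_apply, Viop_apply, ih]
    congr 2
    push_cast
    ring

lemma upow_e00 (t : ℕ) :
    ((Uop k q) ^ t) (Finsupp.single ((0 : ℤ), (0 : ℤ)) (1 : k))
      = Finsupp.single (((t : ℕ) : ℤ), (0 : ℤ)) (1 : k) := by
  induction t with
  | zero => simp
  | succ n ih =>
    rw [pow_succ', Module.End.mul_apply, ih, Uop, opT_single]
    simp

/-- The image of `y` in the representation. -/
noncomputable def Wop (k : Type*) [Field k] (q : k) (d : ℕ) : Module.End k (Vsp k) :=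
  ((Vop k) ^ d - 1) * Uiop k q

lemma Wop_apply (w : Vsp k) (a b : ℤ) :
    Wop k q d w (a, b) = q ^ ((d : ℤ) - b) * w (a + 1, b - d) - q ^ (-b) * w (a + 1, b) := by
  rw [Wop, Module.End.mul_apply, LinearMap.sub_apply, Module.End.one_apply,
    Finsupp.sub_apply, vopow_apply, Uiop_apply, Uiop_apply]
  rw [neg_sub]

/-- `W^j` applied to the basis vector `e₀₀`. -/
noncomputable def wvec (k : Type*) [Field k] (q : k) (d : ℕ) (j : ℕ) : Vsp k :=
  ((Wop k q d) ^ j) (Finsupp.single ((0 : ℤ), (0 : ℤ)) (1 : k))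

lemma wvec_succ (j : ℕ) : wvec k q d (j + 1) = Wop k q d (wvec k q d j) := by
  rw [wvec, wvec, pow_succ', Module.End.mul_apply]

lemma wvec_supp (j : ℕ) : ∀ a b : ℤ, wvec k q d j (a, b) ≠ 0 → a = -(j : ℤ) ∧ b ≤ (j : ℤ) * d := by
  induction j with
  | zero =>
    intro a b h
    rw [wvec, pow_zero, Module.End.one_apply, Finsupp.single_apply] at h
    split_ifs at h with hc
    · obtain ⟨h1, h2⟩ := Prod.mk.injEq .. ▸ hc
      constructor <;> omega
    · exact absurd rfl h
  | succ j ih =>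
    intro a b h
    rw [wvec_succ, Wop_apply] at h
    have h2 : wvec k q d j (a + 1, b - d) ≠ 0 ∨ wvec k q d j (a + 1, b) ≠ 0 := by
      by_contra hc
      push_neg at hc
      rw [hc.1, hc.2, mul_zero, mul_zero, sub_zero] at h
      exact h rfl
    have he : ((j : ℤ) + 1) * d = (j : ℤ) * d + d := by ring
    rcases h2 with h2 | h2
    · obtain ⟨ha, hb⟩ := ih _ _ h2
      refine ⟨by push_cast; omega, ?_⟩
      push_cast
      omega
    · obtain ⟨ha, hb⟩ := ih _ _ h2
      have hd0 : 0 ≤ (d : ℤ) := by positivity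
      refine ⟨by push_cast; omega, ?_⟩
      push_cast
      omega

lemma wvec_coef (hq0 : q ≠ 0) (hd : 1 ≤ d) (j : ℕ) :
    wvec k q d j (-(j : ℤ), (j : ℤ) * d) ≠ 0 := by
  induction j with
  | zero => simp [wvec]
  | succ j ih =>
    rw [wvec_succ, Wop_apply]
    have e1 : (-((j : ℕ) + 1 : ℕ) : ℤ) + 1 = -(j : ℤ) := by push_cast; ring
    have e2 : (((j : ℕ) + 1 : ℕ) : ℤ) * d - d = (j : ℤ) * d := by push_cast; ring
    have hz : wvec k q d j (-(((j : ℕ) + 1 : ℕ) : ℤ) + 1, (((j : ℕ) + 1 : ℕ) : ℤ) * d) = 0 := by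
      by_contra hc
      obtain ⟨ha, hb⟩ := wvec_supp j _ _ hc
      push_cast at hb
      have : 1 ≤ (d : ℤ) := by exact_mod_cast hd
      nlinarith
    rw [hz, mul_zero, sub_zero, e1, e2]
    exact mul_ne_zero (zpow_ne_zero _ hq0) ih

end Comp
end Stmt9
namespace Stmt9

variable {k : Type*} [Field k] {q : k} {d : ℕ}

section Col

/-- The composite representation of the GWA. -/
noncomputable def Phi (k : Type*) [Field k] (q : k) (d : ℕ) (hq0 : q ≠ 0) :
    GWA k q d →ₐ[k] Module.End k (Vsp k) :=
  (rho k q hq0).comp (phi k q d hq0)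

lemma Phi_h (hq0 : q ≠ 0) : Phi k q d hq0 (hGen k q d) = Vop k := by
  rw [Phi, AlgHom.comp_apply, phi_h, rho_v]

lemma Phi_hi (hq0 : q ≠ 0) : Phi k q d hq0 (hInv k q d) = Viop k := by
  rw [Phi, AlgHom.comp_apply, phi_hi, rho_vi]

lemma Phi_x (hq0 : q ≠ 0) : Phi k q d hq0 (xGen k q d) = Uop k q := by
  rw [Phi, AlgHom.comp_apply, phi_x, rho_u]

lemma Phi_y (hq0 : q ≠ 0) : Phi k q d hq0 (yGen k q d) = Wop k q d := by
  rw [Phi, AlgHom.comp_apply, phi_y, map_mul, map_sub, map_pow, map_one, rho_v, rho_ui, Wop]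

lemma Phi_hZPow_apply (hq0 : q ≠ 0) (m : ℤ) (w : Vsp k) (a b : ℤ) :
    Phi k q d hq0 (hZPow k q d m) w (a, b) = w (a, b - m) := by
  rcases le_or_gt 0 m with hm | hm
  · obtain ⟨n, rfl⟩ : ∃ n : ℕ, m = (n : ℤ) := ⟨m.toNat, by omega⟩
    rw [hZPow, if_pos hm, Int.toNat_natCast, map_pow, Phi_h, vopow_apply]
  · obtain ⟨n, rfl⟩ : ∃ n : ℕ, m = -(n : ℤ) := ⟨(-m).toNat, by omega⟩
    rw [hZPow, if_neg (by omega), neg_neg, Int.toNat_natCast, map_pow, Phi_hi, vipow_apply,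
      sub_neg_eq_add]

/-- Images of the monomials applied to `e₀₀`. -/
noncomputable def Fv (k : Type*) [Field k] (q : k) (d : ℕ) (hq0 : q ≠ 0) (p : ℤ × ℤ) : Vsp k :=
  Phi k q d hq0 (MM k q d p) (Finsupp.single ((0 : ℤ), (0 : ℤ)) (1 : k))

lemma Fv_x (hq0 : q ≠ 0) (m : ℤ) (t : ℕ) :
    Fv k q d hq0 (m, (t : ℤ)) = Finsupp.single (((t : ℕ) : ℤ), m) (1 : k) := by
  refine Finsupp.ext fun x => ?_
  obtain ⟨a, b⟩ := x
  rw [Fv, MM_x, map_mul, Module.End.mul_apply, map_pow, Phi_x, upow_e00, Phi_hZPow_apply]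
  rw [Finsupp.single_apply, Finsupp.single_apply]
  have hiff : ((((t : ℕ) : ℤ), (0 : ℤ)) = (a, b - m)) ↔ ((((t : ℕ) : ℤ), m) = (a, b)) := by
    constructor <;> (intro hh; simp only [Prod.mk.injEq] at hh ⊢; omega)
  by_cases hc : (((t : ℕ) : ℤ), (0 : ℤ)) = (a, b - m)
  · rw [if_pos hc, if_pos (hiff.mp hc)]
  · rw [if_neg hc, if_neg fun hh => hc (hiff.mpr hh)]

lemma Fv_y (hq0 : q ≠ 0) (m : ℤ) (t : ℕ) (x : ℤ × ℤ) :
    Fv k q d hq0 (m, -(t : ℤ)) x = wvec k q d t (x.1, x.2 - m) := by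
  obtain ⟨a, b⟩ := x
  rw [Fv, MM_y, map_mul, Module.End.mul_apply, map_pow, Phi_y, Phi_hZPow_apply]
  rfl

/-- The projection onto a column of the plane. -/
noncomputable def colL (k : Type*) [Field k] (a : ℤ) : Vsp k →ₗ[k] AddMonoidAlgebra k ℤ :=
  (AddMonoidAlgebra.coeffLinearEquiv k).symm.toLinearMap ∘ₗ
  Finsupp.lcomapDomain (fun b => ((a : ℤ), b)) (fun b1 b2 h => by
    simpa using congrArg Prod.snd h)

lemma colL_apply (a : ℤ) (w : Vsp k) (b : ℤ) : (colL k a w).coeff b = w (a, b) := rfl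

/-- Column generating elements. -/
noncomputable def Gg (k : Type*) [Field k] (q : k) (d : ℕ) (a : ℤ) : AddMonoidAlgebra k ℤ :=
  if 0 ≤ a then AddMonoidAlgebra.single 0 1 else colL k a (wvec k q d (-a).toNat)

lemma Gg_ne (hq0 : q ≠ 0) (hd : 1 ≤ d) (a : ℤ) : Gg k q d a ≠ 0 := by
  rcases le_or_gt 0 a with ha | ha
  · rw [Gg, if_pos ha]
    intro hcon
    exact one_ne_zero (AddMonoidAlgebra.single_eq_zero.mp hcon)
  · obtain ⟨j, rfl⟩ : ∃ j : ℕ, a = -((j : ℕ) : ℤ) := ⟨(-a).toNat, by omega⟩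
    rw [Gg, if_neg (by omega), neg_neg, Int.toNat_natCast]
    intro hcon
    have h2 : (colL k (-((j : ℕ) : ℤ)) (wvec k q d j)).coeff (((j : ℕ) : ℤ) * d) ≠ 0 := by
      rw [colL_apply]
      exact wvec_coef hq0 hd _
    rw [hcon] at h2
    simp at h2

lemma col_Fv (hq0 : q ≠ 0) (hd : 1 ≤ d) (a : ℤ) (p : ℤ × ℤ) :
    colL k a (Fv k q d hq0 p)
      = if p.2 = a then (AddMonoidAlgebra.single p.1 1 : AddMonoidAlgebra k ℤ) * Gg k q d a else 0 := by
  obtain ⟨m, n⟩ := p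
  rcases le_or_gt 0 n with hn | hn
  · obtain ⟨t, rfl⟩ : ∃ t : ℕ, n = (t : ℤ) := ⟨n.toNat, by omega⟩
    rw [Fv_x]
    refine AddMonoidAlgebra.ext (Finsupp.ext fun b => ?_)
    rw [colL_apply]
    by_cases hc : ((t : ℕ) : ℤ) = a
    · rw [if_pos hc]
      rw [Gg, if_pos (by omega), AddMonoidAlgebra.single_mul_single, add_zero, mul_one]
      rw [AddMonoidAlgebra.coeff_single, Finsupp.single_apply, Finsupp.single_apply]
      by_cases hb : m = b
      · rw [if_pos (by rw [hc, hb]), if_pos hb]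
      · rw [if_neg (by simp only [Prod.mk.injEq]; tauto), if_neg hb]
    · rw [if_neg hc, Finsupp.single_apply,
        if_neg (by simp only [Prod.mk.injEq]; tauto)]
      rfl
  · obtain ⟨t, rfl⟩ : ∃ t : ℕ, n = -(t : ℤ) := ⟨(-n).toNat, by omega⟩
    by_cases hc : -(t : ℤ) = a
    · rw [if_pos hc]
      refine AddMonoidAlgebra.ext (Finsupp.ext fun b => ?_)
      rw [colL_apply]
      have hFv := Fv_y (d := d) hq0 m t (a, b)
      rw [hFv]
      rw [Gg, if_neg (by omega)]
      have ht : (-a).toNat = t := by omega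
      rw [ht, AddMonoidAlgebra.coeff_single_mul_apply, colL_apply, one_mul, neg_add_eq_sub]
    · rw [if_neg hc]
      refine AddMonoidAlgebra.ext (Finsupp.ext fun b => ?_)
      rw [colL_apply]
      have hFv := Fv_y (d := d) hq0 m t (a, b)
      rw [hFv]
      by_contra hne
      have := (wvec_supp t a (b - m) (by simpa using hne)).1
      omega

end Col
end Stmt9
namespace Stmt9
theorem stmt9' {k : Type*} [Field k] {q : k} (d : ℕ) (hd : 1 ≤ d) (hq0 : q ≠ 0) :
    Function.Injective (phi k q d hq0) := by
  rw [injective_iff_map_eq_zero]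
  intro a ha
  obtain ⟨c, hc⟩ := Finsupp.mem_span_range_iff_exists_finsupp.mp (mem_SpM hq0 a)
  suffices hcz : c = 0 by
    rw [← hc, hcz, Finsupp.sum_zero_index]
  have hPhi : Phi k q d hq0 a = 0 := by
    rw [Phi, AlgHom.comp_apply, ha, map_zero]
  rw [← hc, map_finsuppSum] at hPhi
  simp only [map_smul] at hPhi
  have hsum : (c.sum fun p t => t • Fv k q d hq0 p) = 0 := by
    have h1 := congrArg
      (fun T : Module.End k (Vsp k) => T (Finsupp.single ((0 : ℤ), (0 : ℤ)) (1 : k))) hPhi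
    simp only [LinearMap.zero_apply] at h1
    rw [Finsupp.sum, LinearMap.sum_apply] at h1
    simp only [LinearMap.smul_apply] at h1
    rw [Finsupp.sum]
    exact h1
  refine Finsupp.ext fun p => ?_
  have h2 := congrArg (colL k p.2) hsum
  rw [map_finsuppSum, map_zero] at h2
  simp only [map_smul, col_Fv hq0 hd] at h2
  have hcol : (c.sum fun p' t =>
      if p'.2 = p.2 then (AddMonoidAlgebra.single p'.1 t : AddMonoidAlgebra k ℤ) else 0)
      * Gg k q d p.2 = 0 := by
    rw [Finsupp.sum_mul]
    refine Eq.trans ?_ h2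
    apply Finsupp.sum_congr
    intro p' _
    by_cases hpp : p'.2 = p.2
    · rw [if_pos hpp, if_pos hpp, ← smul_mul_assoc, AddMonoidAlgebra.smul_single, smul_eq_mul, mul_one]
    · rw [if_neg hpp, if_neg hpp, zero_mul, smul_zero]
  have hL := (mul_eq_zero.mp hcol).resolve_right (Gg_ne hq0 hd p.2)
  have h3 := congrArg (fun f : AddMonoidAlgebra k ℤ => f.coeff p.1) hL
  simp only [AddMonoidAlgebra.coeff_zero, Finsupp.coe_zero, Pi.zero_apply] at h3
  rw [AddMonoidAlgebra.coeff_finsuppSum, Finsupp.sum_apply] at h3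
  have h4 : (c.sum fun p' t => if p' = p then t else 0) = 0 := by
    refine Eq.trans ?_ h3
    apply Finsupp.sum_congr
    intro p' _
    by_cases hpp : p'.2 = p.2
    · rw [if_pos hpp, AddMonoidAlgebra.coeff_single, Finsupp.single_apply]
      by_cases h1 : p'.1 = p.1
      · rw [if_pos h1, if_pos (by obtain ⟨_, _⟩ := p; obtain ⟨_, _⟩ := p'; simp_all)]
      · rw [if_neg h1, if_neg (by obtain ⟨_, _⟩ := p; obtain ⟨_, _⟩ := p'; simp_all)]
    · rw [if_neg hpp, if_neg (by obtain ⟨_, _⟩ := p; obtain ⟨_, _⟩ := p'; simp_all)]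
      rfl
  rw [Finsupp.sum, Finset.sum_ite_eq' c.support p (fun p' => c p')] at h4
  split_ifs at h4 with hmem
  · exact h4
  · exact Finsupp.notMem_support_iff.mp hmem

end Stmt9

/-- `φ(x) = u`, `φ(y) = (v^d − 1)u^{-1}`, `φ(h) = v` defines an
injective `k`-algebra homomorphism from `A = k[h^{±1}](σ, h^d − 1)` into the
quantum torus `T_q`. -/
theorem stmt9 (d : ℕ) (hd : 1 ≤ d) (hq0 : q ≠ 0) (hqd : q ^ d ≠ 1) :
    ∃ φ : GWA k q d →ₐ[k] QTorus k q,
      φ (hGen k q d) = vGen k q ∧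
      φ (hInv k q d) = vInv k q ∧
      φ (xGen k q d) = uGen k q ∧
      φ (yGen k q d) = (vGen k q ^ d - 1) * uInv k q ∧
      Function.Injective φ := by
  exact ⟨Stmt9.phi k q d hq0, Stmt9.phi_h hq0, Stmt9.phi_hi hq0, Stmt9.phi_x hq0,
    Stmt9.phi_y hq0, Stmt9.stmt9' d hd hq0⟩
end

section
/- Let k be a field, q ∈ k* with q^d ≠ 1, and A = k[h^{±1}](σ, h^d − 1) with σ(h) = qh. For any γ ∈ k* with γ^d = q^{-τ d}, τ ∈ {0,1}, and units p, p' ∈ k[h^{±1}] (Laurent monomials) with p p' = (−h^{-d})^τ, the assignment ψ(h) = γ h^{(-1)^τ}, ψ(x) = p x^{1-τ} y^τ, ψ(y) = x^τ y^{1-τ} p' extends to a k-algebra automorphism of A. -/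
variable (k : Type*) [Field k] (q : k) (d : ℕ)

-- ### auxiliary development

theorem rel_hh : hGen k q d * hInv k q d = 1 := by
  have h := RingQuot.mkAlgHom_rel k (GWARel.hh (k := k) (q := q) (d := d))
  rw [map_mul, map_one] at h
  exact h

theorem rel_hh' : hInv k q d * hGen k q d = 1 := by
  have h := RingQuot.mkAlgHom_rel k (GWARel.hh' (k := k) (q := q) (d := d))
  rw [map_mul, map_one] at h
  exact h

theorem rel_xh : xGen k q d * hGen k q d = q • (hGen k q d * xGen k q d) := by
  have h := RingQuot.mkAlgHom_rel k (GWARel.xh (k := k) (q := q) (d := d))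
  rw [map_mul, map_smul, map_mul] at h
  exact h

theorem rel_yh : yGen k q d * hGen k q d = q⁻¹ • (hGen k q d * yGen k q d) := by
  have h := RingQuot.mkAlgHom_rel k (GWARel.yh (k := k) (q := q) (d := d))
  rw [map_mul, map_smul, map_mul] at h
  exact h

theorem rel_xy : xGen k q d * yGen k q d = q ^ d • hGen k q d ^ d - 1 := by
  have h := RingQuot.mkAlgHom_rel k (GWARel.xy (k := k) (q := q) (d := d))
  rw [map_mul, map_sub, map_smul, map_pow, map_one] at h
  exact h

theorem rel_yx : yGen k q d * xGen k q d = hGen k q d ^ d - 1 := by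
  have h := RingQuot.mkAlgHom_rel k (GWARel.yx (k := k) (q := q) (d := d))
  rw [map_mul, map_sub, map_pow, map_one] at h
  exact h

/-- `h` as a unit. -/
noncomputable def hU : (GWA k q d)ˣ := ⟨hGen k q d, hInv k q d, rel_hh k q d, rel_hh' k q d⟩

/-- integer powers of `h`. -/
noncomputable def up (m : ℤ) : GWA k q d := ((hU k q d ^ m : (GWA k q d)ˣ) : GWA k q d)

theorem up_add (m n : ℤ) : up k q d m * up k q d n = up k q d (m + n) := by
  rw [up, up, up, zpow_add, Units.val_mul]

theorem up_add' (m n : ℤ) (z : GWA k q d) :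
    up k q d m * (up k q d n * z) = up k q d (m + n) * z := by
  rw [← mul_assoc, up_add]

theorem up_zero : up k q d 0 = 1 := by simp [up]

theorem up_one : up k q d 1 = hGen k q d := by
  rw [up, zpow_one]; rfl

theorem up_negOne : up k q d (-1) = hInv k q d := by
  rw [up, zpow_neg, zpow_one]; rfl

theorem up_natCast (t : ℕ) : up k q d (t : ℤ) = hGen k q d ^ t := by
  rw [up, zpow_natCast, Units.val_pow_eq_pow_val]; rfl

theorem up_pow (m : ℤ) (t : ℕ) : up k q d m ^ t = up k q d (m * t) := by
  rw [up, up, ← Units.val_pow_eq_pow_val, ← zpow_natCast, ← zpow_mul]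

theorem hZPow_eq_up (m : ℤ) : hZPow k q d m = up k q d m := by
  unfold hZPow
  split
  · rw [← up_natCast, Int.toNat_of_nonneg ‹0 ≤ m›]
  · have h1 : hInv k q d ^ (-m).toNat = ((hU k q d)⁻¹ ^ (-m).toNat : (GWA k q d)ˣ) := by
      rw [Units.val_pow_eq_pow_val]; rfl
    rw [h1, up, ← zpow_natCast, inv_zpow, ← zpow_neg,
      show (((-m).toNat : ℤ)) = -m by omega, neg_neg]
theorem rel_xhInv (hq0 : q ≠ 0) :
    xGen k q d * hInv k q d = q⁻¹ • (hInv k q d * xGen k q d) := by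
  have h1 : hInv k q d * xGen k q d = q • (xGen k q d * hInv k q d) := by
    calc hInv k q d * xGen k q d
        = hInv k q d * (xGen k q d * hGen k q d) * hInv k q d := by
          rw [mul_assoc, mul_assoc, rel_hh, mul_one]
      _ = q • (xGen k q d * hInv k q d) := by
          rw [rel_xh, mul_smul_comm, smul_mul_assoc, ← mul_assoc, rel_hh', one_mul]
  rw [h1, smul_smul, inv_mul_cancel₀ hq0, one_smul]

theorem rel_yhInv (hq0 : q ≠ 0) :
    yGen k q d * hInv k q d = q • (hInv k q d * yGen k q d) := by
  have h1 : hInv k q d * yGen k q d = q⁻¹ • (yGen k q d * hInv k q d) := by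
    calc hInv k q d * yGen k q d
        = hInv k q d * (yGen k q d * hGen k q d) * hInv k q d := by
          rw [mul_assoc, mul_assoc, rel_hh, mul_one]
      _ = q⁻¹ • (yGen k q d * hInv k q d) := by
          rw [rel_yh, mul_smul_comm, smul_mul_assoc, ← mul_assoc, rel_hh', one_mul]
  rw [h1, smul_smul, mul_inv_cancel₀ hq0, one_smul]

theorem x_up (hq0 : q ≠ 0) (m : ℤ) :
    xGen k q d * up k q d m = q ^ m • (up k q d m * xGen k q d) := by
  induction m using Int.induction_on with
  | zero => simp [up_zero]
  | succ n ih =>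
      rw [← up_add, ← mul_assoc, ih, up_one, smul_mul_assoc, mul_assoc, rel_xh,
        mul_smul_comm, smul_smul, ← up_one k q d, up_add', up_add]
      congr 1
      simp [zpow_add₀ hq0, zpow_neg]
  | pred n ih =>
      rw [show (-(n:ℤ) - 1) = (-n) + (-1) by ring, ← up_add, ← mul_assoc, ih, up_negOne,
        smul_mul_assoc, mul_assoc, rel_xhInv k q d hq0,
        mul_smul_comm, smul_smul, ← up_negOne k q d, up_add', up_add]
      congr 1
      simp [zpow_add₀ hq0, zpow_neg]

theorem y_up (hq0 : q ≠ 0) (m : ℤ) :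
    yGen k q d * up k q d m = q ^ (-m) • (up k q d m * yGen k q d) := by
  induction m using Int.induction_on with
  | zero => simp [up_zero]
  | succ n ih =>
      rw [← up_add, ← mul_assoc, ih, up_one, smul_mul_assoc, mul_assoc, rel_yh,
        mul_smul_comm, smul_smul, ← up_one k q d, up_add', up_add]
      congr 1
      rw [show -((n:ℤ)+1) = -(n:ℤ) + (-1) by ring]
      simp [zpow_add₀ hq0, zpow_neg]
  | pred n ih =>
      rw [show (-(n:ℤ) - 1) = (-n) + (-1) by ring, ← up_add, ← mul_assoc, ih, up_negOne,
        smul_mul_assoc, mul_assoc, rel_yhInv k q d hq0,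
        mul_smul_comm, smul_smul, ← up_negOne k q d, up_add', up_add]
      congr 1
      rw [show -(-(n:ℤ) + -1) = -(-(n:ℤ)) + 1 by ring]
      simp [zpow_add₀ hq0, zpow_neg]

theorem x_up' (hq0 : q ≠ 0) (m : ℤ) (z : GWA k q d) :
    xGen k q d * (up k q d m * z) = q ^ m • (up k q d m * (xGen k q d * z)) := by
  rw [← mul_assoc, x_up k q d hq0, smul_mul_assoc, mul_assoc]

theorem y_up' (hq0 : q ≠ 0) (m : ℤ) (z : GWA k q d) :
    yGen k q d * (up k q d m * z) = q ^ (-m) • (up k q d m * (yGen k q d * z)) := by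
  rw [← mul_assoc, y_up k q d hq0, smul_mul_assoc, mul_assoc]

theorem rel_xy' : xGen k q d * yGen k q d = q ^ d • up k q d d - 1 := by
  rw [rel_xy, up_natCast]

theorem rel_yx' : yGen k q d * xGen k q d = up k q d d - 1 := by
  rw [rel_yx, up_natCast]
-- ### a representation on `ℤ →₀ k`, used to extract scalar data

/-- multiplication by `z`. -/
noncomputable def Hop : (ℤ →₀ k) →ₗ[k] (ℤ →₀ k) :=
  Finsupp.lsum k fun n => Finsupp.lsingle (n + 1)

/-- multiplication by `z⁻¹`. -/
noncomputable def Hinvop : (ℤ →₀ k) →ₗ[k] (ℤ →₀ k) :=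
  Finsupp.lsum k fun n => Finsupp.lsingle (n - 1)

/-- `f(z) ↦ f(qz)`. -/
noncomputable def Xop : (ℤ →₀ k) →ₗ[k] (ℤ →₀ k) :=
  Finsupp.lsum k fun n => q ^ n • Finsupp.lsingle n

/-- `f(z) ↦ (z^d - 1) f(q⁻¹ z)`. -/
noncomputable def Yop : (ℤ →₀ k) →ₗ[k] (ℤ →₀ k) :=
  Finsupp.lsum k fun n => q ^ (-n) • (Finsupp.lsingle (n + d) - Finsupp.lsingle n)

theorem Hop_single (n : ℤ) (a : k) :
    Hop k (Finsupp.single n a) = Finsupp.single (n + 1) a := by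
  rw [Hop, Finsupp.lsum_single, Finsupp.lsingle_apply]

theorem Hinvop_single (n : ℤ) (a : k) :
    Hinvop k (Finsupp.single n a) = Finsupp.single (n - 1) a := by
  rw [Hinvop, Finsupp.lsum_single, Finsupp.lsingle_apply]

theorem Xop_single (n : ℤ) (a : k) :
    Xop k q (Finsupp.single n a) = q ^ n • Finsupp.single n a := by
  rw [Xop, Finsupp.lsum_single, LinearMap.smul_apply, Finsupp.lsingle_apply]

theorem Yop_single (n : ℤ) (a : k) :
    Yop k q d (Finsupp.single n a)
      = q ^ (-n) • (Finsupp.single (n + d) a - Finsupp.single n a) := by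
  rw [Yop, Finsupp.lsum_single, LinearMap.smul_apply, LinearMap.sub_apply,
    Finsupp.lsingle_apply, Finsupp.lsingle_apply]

theorem Hop_pow_single (t : ℕ) (n : ℤ) (a : k) :
    (Hop k ^ t) (Finsupp.single n a) = Finsupp.single (n + t) a := by
  induction t with
  | zero => simp
  | succ t ih =>
      rw [pow_succ', Module.End.mul_apply, ih, Hop_single]
      congr 1
      push_cast; ring

theorem Hinvop_pow_single (t : ℕ) (n : ℤ) (a : k) :
    (Hinvop k ^ t) (Finsupp.single n a) = Finsupp.single (n - t) a := by
  induction t with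
  | zero => simp
  | succ t ih =>
      rw [pow_succ', Module.End.mul_apply, ih, Hinvop_single]
      congr 1
      push_cast; ring

theorem End_hh : Hop k * Hinvop k = 1 := by
  refine Finsupp.lhom_ext fun n a => ?_
  rw [Module.End.mul_apply, Module.End.one_apply, Hinvop_single, Hop_single]
  congr 1; ring

theorem End_hh' : Hinvop k * Hop k = 1 := by
  refine Finsupp.lhom_ext fun n a => ?_
  rw [Module.End.mul_apply, Module.End.one_apply, Hop_single, Hinvop_single]
  congr 1; ring

theorem End_xh (hq0 : q ≠ 0) : Xop k q * Hop k = q • (Hop k * Xop k q) := by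
  refine Finsupp.lhom_ext fun n a => ?_
  rw [Module.End.mul_apply, LinearMap.smul_apply, Module.End.mul_apply, Hop_single,
    Xop_single, Xop_single, map_smul, Hop_single, smul_smul]
  congr 1
  rw [zpow_add₀ hq0, zpow_one, mul_comm]

theorem End_yh (hq0 : q ≠ 0) : Yop k q d * Hop k = q⁻¹ • (Hop k * Yop k q d) := by
  refine Finsupp.lhom_ext fun n a => ?_
  rw [Module.End.mul_apply, LinearMap.smul_apply, Module.End.mul_apply, Hop_single,
    Yop_single, Yop_single, map_smul, map_sub, Hop_single, Hop_single, smul_smul]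
  rw [show n + 1 + (d:ℤ) = n + (d:ℤ) + 1 by ring]
  congr 1
  rw [show -(n+1) = -n + (-1) by ring, zpow_add₀ hq0]
  simp [zpow_neg_one]
  ring

theorem End_xy (hq0 : q ≠ 0) :
    Xop k q * Yop k q d = q ^ d • Hop k ^ d - 1 := by
  refine Finsupp.lhom_ext fun n a => ?_
  rw [Module.End.mul_apply, LinearMap.sub_apply, LinearMap.smul_apply, Module.End.one_apply,
    Hop_pow_single, Yop_single, map_smul, map_sub, Xop_single, Xop_single, smul_sub,
    smul_smul, smul_smul]
  have h1 : q ^ (-n) * q ^ (n + (d:ℤ)) = q ^ d := by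
    rw [← zpow_add₀ hq0, show -n + (n + (d:ℤ)) = (d:ℤ) by ring, zpow_natCast]
  have h2 : q ^ (-n) * q ^ n = 1 := by
    rw [← zpow_add₀ hq0]; simp
  rw [h1, h2, one_smul]

theorem End_yx (hq0 : q ≠ 0) :
    Yop k q d * Xop k q = Hop k ^ d - 1 := by
  refine Finsupp.lhom_ext fun n a => ?_
  rw [Module.End.mul_apply, LinearMap.sub_apply, Module.End.one_apply, Hop_pow_single,
    Xop_single, map_smul, Yop_single, smul_smul]
  rw [show (q ^ n) * q ^ (-n) = 1 by rw [← zpow_add₀ hq0]; simp, one_smul]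

/-- The representation of the GWA on `ℤ →₀ k`. -/
noncomputable def rep (hq0 : q ≠ 0) : GWA k q d →ₐ[k] Module.End k (ℤ →₀ k) :=
  RingQuot.liftAlgHom k
    ⟨FreeAlgebra.lift k ![Hop k, Hinvop k, Xop k q, Yop k q d], by
      rintro a b r
      cases r <;>
        simp only [map_mul, map_smul, map_sub, map_pow, map_one,
          FreeAlgebra.lift_ι_apply, Matrix.cons_val_zero, Matrix.cons_val_one,
          Matrix.head_cons, Matrix.cons_val_two, Matrix.tail_cons, Matrix.cons_val_three]
      · exact End_hh k
      · exact End_hh' k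
      · exact End_xh k q hq0
      · exact End_yh k q d hq0
      · exact End_xy k q d hq0
      · exact End_yx k q d hq0⟩
theorem rep_hGen (hq0 : q ≠ 0) : rep k q d hq0 (hGen k q d) = Hop k := by
  rw [hGen, rep, RingQuot.liftAlgHom_mkAlgHom_apply, FreeAlgebra.lift_ι_apply]
  rfl

theorem rep_hInv (hq0 : q ≠ 0) : rep k q d hq0 (hInv k q d) = Hinvop k := by
  rw [hInv, rep, RingQuot.liftAlgHom_mkAlgHom_apply, FreeAlgebra.lift_ι_apply]
  rfl

theorem rep_up (hq0 : q ≠ 0) (m : ℤ) (n : ℤ) (a : k) :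
    rep k q d hq0 (up k q d m) (Finsupp.single n a) = Finsupp.single (n + m) a := by
  rcases le_or_gt 0 m with hm | hm
  · rw [show up k q d m = hGen k q d ^ m.toNat by
      rw [← hZPow_eq_up, hZPow, if_pos hm]]
    rw [map_pow, rep_hGen, Hop_pow_single]
    congr 1; omega
  · rw [show up k q d m = hInv k q d ^ (-m).toNat by
      rw [← hZPow_eq_up, hZPow, if_neg (by omega)]]
    rw [map_pow, rep_hInv, Hinvop_pow_single]
    congr 1; omega

theorem extract (hq0 : q ≠ 0) (c c' : k) (s s' : ℤ) (e : ℤ) (b : k) (hb : b ≠ 0)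
    (hpp : (c • up k q d s) * (c' • up k q d s') = b • up k q d e) :
    c * c' = b ∧ s + s' = e := by
  have h := congrArg (fun z => rep k q d hq0 z (Finsupp.single (0:ℤ) (1:k))) hpp
  simp only [map_mul, map_smul, Module.End.mul_apply, LinearMap.smul_apply, map_smul] at h
  rw [rep_up, rep_up, rep_up, smul_smul, Finsupp.smul_single, Finsupp.smul_single,
    smul_eq_mul, smul_eq_mul, mul_one, mul_one] at h
  rcases (Finsupp.single_eq_single_iff _ _ _ _).mp h with ⟨h1, h2⟩ | ⟨h1, h2⟩
  -- note: second case: h1 : c' * c = 0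
  · exact ⟨by rw [mul_comm] at h2; exact h2, by omega⟩
  · exact absurd h2 hb
theorem gwa_hom_ext {B : Type*} [Semiring B] [Algebra k B] (f g : GWA k q d →ₐ[k] B)
    (e0 : f (hGen k q d) = g (hGen k q d)) (e1 : f (hInv k q d) = g (hInv k q d))
    (e2 : f (xGen k q d) = g (xGen k q d)) (e3 : f (yGen k q d) = g (yGen k q d)) :
    f = g := by
  apply RingQuot.ringQuot_ext'
  apply FreeAlgebra.hom_ext
  funext i
  fin_cases i
  · simpa [hGen] using e0
  · simpa [hInv] using e1
  · simpa [xGen] using e2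
  · simpa [yGen] using e3

theorem map_up_eq (Ψ : GWA k q d →ₐ[k] GWA k q d) (γ : k) (hγ0 : γ ≠ 0) (ε : ℤ)
    (h1 : Ψ (hGen k q d) = γ • up k q d ε)
    (h2 : Ψ (hInv k q d) = γ⁻¹ • up k q d (-ε)) (m : ℤ) :
    Ψ (up k q d m) = γ ^ m • up k q d (ε * m) := by
  induction m using Int.induction_on with
  | zero => simp [up_zero]
  | succ n ih =>
      rw [← up_add, map_mul, ih, up_one, h1, smul_mul_assoc, mul_smul_comm, smul_smul,
        up_add, show ε * n + ε = ε * ((n:ℤ) + 1) by ring, zpow_add₀ hγ0, zpow_one]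
  | pred n ih =>
      rw [show -(n:ℤ) - 1 = (-n) + (-1) by ring, ← up_add, map_mul, ih, up_negOne, h2,
        smul_mul_assoc, mul_smul_comm, smul_smul, up_add,
        show ε * (-n) + -ε = ε * (-(n:ℤ) + (-1)) by ring,
        zpow_add₀ hγ0]
      congr 1
      simp [zpow_neg_one]
section F0
variable (hq0 : q ≠ 0) (γ c c' : k) (s s' : ℤ) (hγ0 : γ ≠ 0) (hγd : γ ^ d = 1)
  (hcc : c * c' = 1) (hss : s + s' = 0)

/-- The endomorphism of the GWA in the case `τ = 0`. -/
noncomputable def F0 : GWA k q d →ₐ[k] GWA k q d :=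
  RingQuot.liftAlgHom k
    ⟨FreeAlgebra.lift k ![γ • up k q d 1, γ⁻¹ • up k q d (-1),
        (c • up k q d s) * xGen k q d, yGen k q d * (c' • up k q d s')], by
      have e0 : q ^ (-s') * q ^ (-s) = 1 := by
        rw [← zpow_add₀ hq0, show -s' + -s = 0 by omega, zpow_zero]
      have e1 : q ^ (-s') * q ^ s' = 1 := by
        rw [← zpow_add₀ hq0, show -s' + s' = 0 by omega, zpow_zero]
      rintro a b r
      cases r <;>
        simp only [map_mul, map_smul, map_sub, map_pow, map_one, FreeAlgebra.lift_ι_apply,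
          Matrix.cons_val_zero, Matrix.cons_val_one, Matrix.head_cons, Matrix.cons_val_two,
          Matrix.tail_cons, Matrix.cons_val_three] <;>
        simp only [smul_mul_assoc, mul_smul_comm, mul_assoc, x_up k q d hq0,
          x_up' k q d hq0, y_up k q d hq0, y_up' k q d hq0, up_add, up_add', smul_smul,
          rel_xy' k q d, rel_yx' k q d, mul_sub, sub_mul, smul_sub, mul_one, one_mul,
          up_pow, smul_pow, zpow_one, zpow_neg_one]
      · -- hh
        rw [show (1:ℤ) + -1 = 0 by ring, up_zero, inv_mul_cancel₀ hγ0, one_smul]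
      · -- hh'
        rw [show (-1:ℤ) + 1 = 0 by ring, up_zero, mul_inv_cancel₀ hγ0, one_smul]
      · -- xh
        rw [show s + 1 = 1 + s by ring]
        match_scalars; ring
      · -- yh
        rw [show s' + 1 = 1 + s' by ring]
        match_scalars; ring
      · -- xy
        rw [show s + (s' + (d:ℤ)) = ((d:ℕ):ℤ) by omega, hss, up_zero, hγd, mul_one]
        match_scalars
        · linear_combination (q ^ (-s') * q ^ s' * q ^ (d:ℕ)) * hcc + q ^ (d:ℕ) * e1
        · linear_combination (-(q ^ (-s') * q ^ s')) * hcc - e1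
      · -- yx
        rw [show s' + (s + (d:ℤ)) = ((d:ℕ):ℤ) by omega, show s' + s = 0 by omega, up_zero]
        match_scalars
        · linear_combination (q ^ (-s') * q ^ (-s)) * hcc + e0 - hγd
        · linear_combination (-(q ^ (-s') * q ^ (-s))) * hcc - e0⟩

theorem F0_h : F0 k q d hq0 γ c c' s s' hγ0 hγd hcc hss (hGen k q d) = γ • up k q d 1 := by
  rw [hGen, F0, RingQuot.liftAlgHom_mkAlgHom_apply, FreeAlgebra.lift_ι_apply]
  rfl

theorem F0_hInv :
    F0 k q d hq0 γ c c' s s' hγ0 hγd hcc hss (hInv k q d) = γ⁻¹ • up k q d (-1) := by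
  rw [hInv, F0, RingQuot.liftAlgHom_mkAlgHom_apply, FreeAlgebra.lift_ι_apply]
  rfl

theorem F0_x : F0 k q d hq0 γ c c' s s' hγ0 hγd hcc hss (xGen k q d)
    = (c • up k q d s) * xGen k q d := by
  rw [xGen, F0, RingQuot.liftAlgHom_mkAlgHom_apply, FreeAlgebra.lift_ι_apply]
  rfl

theorem F0_y : F0 k q d hq0 γ c c' s s' hγ0 hγd hcc hss (yGen k q d)
    = yGen k q d * (c' • up k q d s') := by
  rw [yGen, F0, RingQuot.liftAlgHom_mkAlgHom_apply, FreeAlgebra.lift_ι_apply]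
  rfl

theorem F0_up (m : ℤ) :
    F0 k q d hq0 γ c c' s s' hγ0 hγd hcc hss (up k q d m) = γ ^ m • up k q d m := by
  have := map_up_eq k q d (F0 k q d hq0 γ c c' s s' hγ0 hγd hcc hss) γ hγ0 1
    (by rw [F0_h, up_one]) (by rw [F0_hInv]) m
  rwa [one_mul] at this

end F0
section F1
variable (hq0 : q ≠ 0) (γ c c' : k) (s s' : ℤ) (hγ0 : γ ≠ 0) (hγd : γ ^ d * q ^ d = 1)
  (hcc : c * c' = -1) (hss : s + s' = -(d:ℤ))

/-- The endomorphism of the GWA in the case `τ = 1`. -/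
noncomputable def F1 : GWA k q d →ₐ[k] GWA k q d :=
  RingQuot.liftAlgHom k
    ⟨FreeAlgebra.lift k ![γ • up k q d (-1), γ⁻¹ • up k q d 1,
        (c • up k q d s) * yGen k q d, xGen k q d * (c' • up k q d s')], by
      rintro a b r
      cases r <;>
        simp only [map_mul, map_smul, map_sub, map_pow, map_one, FreeAlgebra.lift_ι_apply,
          Matrix.cons_val_zero, Matrix.cons_val_one, Matrix.head_cons, Matrix.cons_val_two,
          Matrix.tail_cons, Matrix.cons_val_three] <;>
        simp only [smul_mul_assoc, mul_smul_comm, mul_assoc, x_up k q d hq0,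
          x_up' k q d hq0, y_up k q d hq0, y_up' k q d hq0, up_add, up_add', smul_smul,
          rel_xy' k q d, rel_yx' k q d, mul_sub, sub_mul, smul_sub, mul_one, one_mul,
          up_pow, smul_pow, zpow_one, zpow_neg_one]
      · -- hh
        rw [show (-1:ℤ) + 1 = 0 by ring, up_zero, inv_mul_cancel₀ hγ0, one_smul]
      · -- hh'
        rw [show (1:ℤ) + -1 = 0 by ring, up_zero, mul_inv_cancel₀ hγ0, one_smul]
      · -- xh
        rw [show s + -1 = -1 + s by ring, show q ^ (-(-1:ℤ)) = q by norm_num]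
        match_scalars; ring
      · -- yh
        rw [show s' + -1 = -1 + s' by ring]
        match_scalars; ring
      · -- xy
        have e1 : q ^ s' * q ^ (-s') = 1 := by
          rw [← zpow_add₀ hq0, show s' + -s' = 0 by omega, zpow_zero]
        rw [show s + (s' + (d:ℤ)) = 0 by omega, up_zero, hss,
          show (-1 * (d:ℤ)) = -(d:ℤ) by ring]
        match_scalars
        · linear_combination (q ^ s' * q ^ (-s')) * hcc - e1
        · linear_combination (-(q ^ s' * q ^ (-s'))) * hcc + e1 - hγd
      · -- yx
        have e2 : q ^ s' * (q ^ s * q ^ (d:ℕ)) = 1 := by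
          rw [← zpow_natCast q d, ← zpow_add₀ hq0, ← zpow_add₀ hq0,
            show s' + (s + (d:ℤ)) = 0 by omega, zpow_zero]
        have e3 : q ^ s' * q ^ s = γ ^ d :=
          mul_right_cancel₀ (pow_ne_zero d hq0) (by rw [mul_assoc, e2, hγd])
        rw [show s' + (s + (d:ℤ)) = 0 by omega, up_zero, show s' + s = -(d:ℤ) by omega,
          show (-1 * (d:ℤ)) = -(d:ℤ) by ring]
        match_scalars
        · linear_combination (q ^ s' * (q ^ s * q ^ (d:ℕ))) * hcc - e2
        · linear_combination (-(q ^ s' * q ^ s)) * hcc + e3⟩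

theorem F1_h : F1 k q d hq0 γ c c' s s' hγ0 hγd hcc hss (hGen k q d) = γ • up k q d (-1) := by
  rw [hGen, F1, RingQuot.liftAlgHom_mkAlgHom_apply, FreeAlgebra.lift_ι_apply]
  rfl

theorem F1_hInv :
    F1 k q d hq0 γ c c' s s' hγ0 hγd hcc hss (hInv k q d) = γ⁻¹ • up k q d 1 := by
  rw [hInv, F1, RingQuot.liftAlgHom_mkAlgHom_apply, FreeAlgebra.lift_ι_apply]
  rfl

theorem F1_x : F1 k q d hq0 γ c c' s s' hγ0 hγd hcc hss (xGen k q d)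
    = (c • up k q d s) * yGen k q d := by
  rw [xGen, F1, RingQuot.liftAlgHom_mkAlgHom_apply, FreeAlgebra.lift_ι_apply]
  rfl

theorem F1_y : F1 k q d hq0 γ c c' s s' hγ0 hγd hcc hss (yGen k q d)
    = xGen k q d * (c' • up k q d s') := by
  rw [yGen, F1, RingQuot.liftAlgHom_mkAlgHom_apply, FreeAlgebra.lift_ι_apply]
  rfl

theorem F1_up (m : ℤ) :
    F1 k q d hq0 γ c c' s s' hγ0 hγd hcc hss (up k q d m) = γ ^ m • up k q d (-m) := by
  have := map_up_eq k q d (F1 k q d hq0 γ c c' s s' hγ0 hγd hcc hss) γ hγ0 (-1)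
    (by rw [F1_h]) (by rw [F1_hInv, neg_neg, up_one]) m
  rwa [show (-1) * m = -m by ring] at this

end F1

/-- for `γ ∈ k*` with `γ^d = q^{-τd}`, `τ ∈ {0,1}`, and Laurent
monomial units `p = c h^s`, `p' = c' h^{s'}` with `p p' = (−h^{-d})^τ`, the
assignment `h ↦ γ h^{(-1)^τ}`, `x ↦ p x^{1-τ} y^τ`, `y ↦ x^τ y^{1-τ} p'`
extends to a `k`-algebra automorphism of `A`. -/
theorem stmt10 (hd : 1 ≤ d) (hq0 : q ≠ 0) (hqd : q ^ d ≠ 1)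
    (τ : ℕ) (hτ : τ ≤ 1) (γ : k) (hγ0 : γ ≠ 0) (hγ : γ ^ d = q ^ (-(τ : ℤ) * d))
    (c c' : k) (hc : c ≠ 0) (hc' : c' ≠ 0) (s s' : ℤ)
    (hpp' : (c • hZPow k q d s) * (c' • hZPow k q d s')
          = (-(hZPow k q d (-(d : ℤ)))) ^ τ) :
    ∃ ψ : GWA k q d ≃ₐ[k] GWA k q d,
      ψ (hGen k q d) = γ • hZPow k q d ((-1) ^ τ) ∧
      ψ (xGen k q d) = (c • hZPow k q d s) * xGen k q d ^ (1 - τ) * yGen k q d ^ τ ∧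
      ψ (yGen k q d) = xGen k q d ^ τ * yGen k q d ^ (1 - τ) * (c' • hZPow k q d s') := by
  rw [hZPow_eq_up, hZPow_eq_up, hZPow_eq_up] at hpp'
  interval_cases τ
  · -- τ = 0
    have hγd : γ ^ d = 1 := by simpa using hγ
    have hpp'' : (c • up k q d s) * (c' • up k q d s') = (1:k) • up k q d 0 := by
      rw [up_zero, one_smul, hpp', pow_zero]
    obtain ⟨hcc, hss⟩ := extract k q d hq0 c c' s s' 0 1 one_ne_zero hpp''
    have hγ0' : γ⁻¹ ≠ 0 := inv_ne_zero hγ0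
    have hγd' : γ⁻¹ ^ d = 1 := by rw [inv_pow, hγd, inv_one]
    have hzz : γ ^ s * γ ^ (-s) = 1 := by
      rw [← zpow_add₀ hγ0, show s + -s = 0 by omega, zpow_zero]
    have hcc' : (γ ^ s * c⁻¹) * (γ ^ (-s) * c'⁻¹) = 1 := by
      field_simp
      linear_combination hzz - hcc
    have hss' : (-s) + s = 0 := by omega
    refine ⟨AlgEquiv.ofAlgHom (F0 k q d hq0 γ c c' s s' hγ0 hγd hcc hss)
      (F0 k q d hq0 γ⁻¹ (γ ^ s * c⁻¹) (γ ^ (-s) * c'⁻¹) (-s) s hγ0' hγd' hcc' hss')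
      ?_ ?_, ?_, ?_, ?_⟩
    · apply gwa_hom_ext <;>
        simp only [AlgHom.comp_apply, AlgHom.id_apply, F0_h, F0_hInv, F0_x, F0_y,
          map_mul, map_smul, F0_up, smul_smul, smul_mul_assoc, mul_smul_comm, mul_assoc,
          up_add, up_add', up_zero, zpow_one, zpow_neg_one]
      · rw [inv_mul_cancel₀ hγ0, one_smul, up_one]
      · rw [inv_inv, mul_inv_cancel₀ hγ0, one_smul, up_negOne]
      · rw [show -s + s = 0 by omega, up_zero, one_mul,
          show γ ^ s * (c⁻¹ * (c * γ ^ (-s))) = (γ ^ s * γ ^ (-s)) * (c⁻¹ * c) by ring,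
          hzz, one_mul, inv_mul_cancel₀ hc, one_smul]
      · rw [show s' + s = 0 by omega, up_zero, mul_one,
          show γ ^ (-s) * (c'⁻¹ * (γ ^ s * c')) = (γ ^ s * γ ^ (-s)) * (c'⁻¹ * c') by ring,
          hzz, one_mul, inv_mul_cancel₀ hc', one_smul]
    · apply gwa_hom_ext <;>
        simp only [AlgHom.comp_apply, AlgHom.id_apply, F0_h, F0_hInv, F0_x, F0_y,
          map_mul, map_smul, F0_up, smul_smul, smul_mul_assoc, mul_smul_comm, mul_assoc,
          up_add, up_add', up_zero, zpow_one, zpow_neg_one]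
      · rw [mul_inv_cancel₀ hγ0, one_smul, up_one]
      · rw [inv_inv, inv_mul_cancel₀ hγ0, one_smul, up_negOne]
      · rw [show (γ⁻¹ : k) ^ s = (γ ^ s)⁻¹ from inv_zpow γ s,
          show c * (γ ^ s * (c⁻¹ * (γ ^ s)⁻¹)) = (γ ^ s * (γ ^ s)⁻¹) * (c⁻¹ * c) by ring,
          mul_inv_cancel₀ (zpow_ne_zero s hγ0), one_mul, inv_mul_cancel₀ hc, one_smul,
          show s + -s = 0 by omega, up_zero, one_mul]
      · rw [show s' = -s by omega, show (γ⁻¹ : k) ^ (-s) = (γ ^ (-s))⁻¹ from inv_zpow γ (-s),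
          show c' * ((γ ^ (-s))⁻¹ * (γ ^ (-s) * c'⁻¹))
            = (γ ^ (-s) * (γ ^ (-s))⁻¹) * (c'⁻¹ * c') by ring,
          mul_inv_cancel₀ (zpow_ne_zero (-s) hγ0), one_mul, inv_mul_cancel₀ hc', one_smul,
          show s + -s = 0 by omega, up_zero, mul_one]
    · show F0 k q d hq0 γ c c' s s' hγ0 hγd hcc hss (hGen k q d) = _
      rw [F0_h, pow_zero, hZPow_eq_up]
    · show F0 k q d hq0 γ c c' s s' hγ0 hγd hcc hss (xGen k q d) = _
      rw [F0_x, pow_zero, pow_one, mul_one, hZPow_eq_up]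
    · show F0 k q d hq0 γ c c' s s' hγ0 hγd hcc hss (yGen k q d) = _
      rw [F0_y, pow_zero, pow_one, one_mul, hZPow_eq_up]
  · -- τ = 1
    have hγd : γ ^ d * q ^ d = 1 := by
      rw [hγ, ← zpow_natCast q d, ← zpow_add₀ hq0]
      norm_num
    have hpp'' : (c • up k q d s) * (c' • up k q d s')
        = ((-1 : k)) • up k q d (-(d:ℤ)) := by
      rw [hpp', pow_one]
      exact (neg_one_smul _ _).symm
    obtain ⟨hcc, hss⟩ := extract k q d hq0 c c' s s' (-(d:ℤ)) (-1) (by norm_num) hpp''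
    have g1 : γ ^ (s + (d:ℤ)) * γ ^ (-s) = γ ^ d := by
      rw [← zpow_add₀ hγ0, show s + (d:ℤ) + -s = (d:ℤ) by ring, zpow_natCast]
    have g2 : q ^ (s + (d:ℤ)) * q ^ (-s) = q ^ d := by
      rw [← zpow_add₀ hq0, show s + (d:ℤ) + -s = (d:ℤ) by ring, zpow_natCast]
    have hcc2 : (-(γ ^ (s + (d:ℤ)) * q ^ (s + (d:ℤ)) * c)) * (γ ^ (-s) * q ^ (-s) * c⁻¹)
        = -1 := by
      rw [show (-(γ ^ (s + (d:ℤ)) * q ^ (s + (d:ℤ)) * c)) * (γ ^ (-s) * q ^ (-s) * c⁻¹)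
          = -((γ ^ (s + (d:ℤ)) * γ ^ (-s)) * ((q ^ (s + (d:ℤ)) * q ^ (-s)) * (c * c⁻¹)))
          by ring, g1, g2, mul_inv_cancel₀ hc, mul_one, hγd]
    have hss2 : (-s - (d:ℤ)) + s = -(d:ℤ) := by omega
    have eγ1 : γ ^ (s + (d:ℤ)) * γ ^ (-s - (d:ℤ)) = 1 := by
      rw [← zpow_add₀ hγ0, show s + (d:ℤ) + (-s - (d:ℤ)) = 0 by omega, zpow_zero]
    have eγ2 : γ ^ s * γ ^ (-s) = 1 := by
      rw [← zpow_add₀ hγ0, show s + -s = 0 by omega, zpow_zero]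
    have eγ3 : γ ^ (s + (d:ℤ)) * γ ^ s' = 1 := by
      rw [← zpow_add₀ hγ0, show s + (d:ℤ) + s' = 0 by omega, zpow_zero]
    have eq1 : q ^ (s + (d:ℤ)) * q ^ s' = 1 := by
      rw [← zpow_add₀ hq0, show s + (d:ℤ) + s' = 0 by omega, zpow_zero]
    have eq2 : q ^ s * q ^ (-s) = 1 := by
      rw [← zpow_add₀ hq0, show s + -s = 0 by omega, zpow_zero]
    refine ⟨AlgEquiv.ofAlgHom (F1 k q d hq0 γ c c' s s' hγ0 hγd hcc hss)
      (F1 k q d hq0 γ (-(γ ^ (s + (d:ℤ)) * q ^ (s + (d:ℤ)) * c))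
        (γ ^ (-s) * q ^ (-s) * c⁻¹) (-s - (d:ℤ)) s hγ0 hγd hcc2 hss2)
      ?_ ?_, ?_, ?_, ?_⟩
    · apply gwa_hom_ext <;>
        simp only [AlgHom.comp_apply, AlgHom.id_apply, F1_h, F1_hInv, F1_x, F1_y,
          map_mul, map_smul, F1_up, smul_smul, smul_mul_assoc, mul_smul_comm, mul_assoc,
          x_up k q d hq0, x_up' k q d hq0, y_up k q d hq0, y_up' k q d hq0,
          up_add, up_add', up_zero, zpow_one, zpow_neg_one, neg_mul, neg_smul, neg_neg,
          smul_neg]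
      · rw [mul_inv_cancel₀ hγ0, one_smul, up_one]
      · rw [inv_mul_cancel₀ hγ0, one_smul, up_negOne]
      · rw [show -(-s - (d:ℤ)) + s' = 0 by omega, up_zero, one_mul]
        have hA : γ ^ (s + (d:ℤ)) * (q ^ (s + (d:ℤ)) * (c * (c' * (q ^ s' * γ ^ (-s - (d:ℤ))))))
            = -1 := by
          rw [show γ ^ (s + (d:ℤ)) * (q ^ (s + (d:ℤ)) * (c * (c' * (q ^ s' * γ ^ (-s - (d:ℤ))))))
            = (γ ^ (s + (d:ℤ)) * γ ^ (-s - (d:ℤ))) * ((q ^ (s + (d:ℤ)) * q ^ s') * (c * c'))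
            by ring, eγ1, eq1, hcc]
          norm_num
        rw [hA, neg_one_smul, neg_neg]
      · rw [show -s + s = 0 by omega, up_zero, one_mul]
        have hB : γ ^ (-s) * (q ^ (-s) * (c⁻¹ * (q ^ s * (c * γ ^ s)))) = 1 := by
          rw [show γ ^ (-s) * (q ^ (-s) * (c⁻¹ * (q ^ s * (c * γ ^ s))))
            = (γ ^ s * γ ^ (-s)) * ((q ^ s * q ^ (-s)) * (c * c⁻¹)) by ring,
            eγ2, eq2, mul_inv_cancel₀ hc]
          norm_num
        rw [hB, one_smul]
    · apply gwa_hom_ext <;>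
        simp only [AlgHom.comp_apply, AlgHom.id_apply, F1_h, F1_hInv, F1_x, F1_y,
          map_mul, map_smul, F1_up, smul_smul, smul_mul_assoc, mul_smul_comm, mul_assoc,
          x_up k q d hq0, x_up' k q d hq0, y_up k q d hq0, y_up' k q d hq0,
          up_add, up_add', up_zero, zpow_one, zpow_neg_one, neg_mul, neg_smul, neg_neg,
          smul_neg]
      · rw [mul_inv_cancel₀ hγ0, one_smul, up_one]
      · rw [inv_mul_cancel₀ hγ0, one_smul, up_negOne]
      · rw [show -s + s = 0 by omega, up_zero, one_mul]
        have hB : c * (γ ^ (-s) * (q ^ (-s) * (c⁻¹ * (q ^ s * γ ^ s)))) = 1 := by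
          rw [show c * (γ ^ (-s) * (q ^ (-s) * (c⁻¹ * (q ^ s * γ ^ s))))
            = (γ ^ s * γ ^ (-s)) * ((q ^ s * q ^ (-s)) * (c * c⁻¹)) by ring,
            eγ2, eq2, mul_inv_cancel₀ hc]
          norm_num
        rw [hB, one_smul]
      · rw [show -s' + (-s - (d:ℤ)) = 0 by omega, up_zero, one_mul]
        have hA : c' * (q ^ s' * (γ ^ (s + (d:ℤ)) * (q ^ (s + (d:ℤ)) * (c * γ ^ s'))))
            = -1 := by
          rw [show c' * (q ^ s' * (γ ^ (s + (d:ℤ)) * (q ^ (s + (d:ℤ)) * (c * γ ^ s'))))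
            = (γ ^ (s + (d:ℤ)) * γ ^ s') * ((q ^ (s + (d:ℤ)) * q ^ s') * (c * c'))
            by ring, eγ3, eq1, hcc]
          norm_num
        rw [hA, neg_one_smul, neg_neg]
    · show F1 k q d hq0 γ c c' s s' hγ0 hγd hcc hss (hGen k q d) = _
      rw [F1_h, pow_one, hZPow_eq_up]
    · show F1 k q d hq0 γ c c' s s' hγ0 hγd hcc hss (xGen k q d) = _
      rw [pow_zero, mul_one, pow_one, hZPow_eq_up, F1_x]
    · show F1 k q d hq0 γ c c' s s' hγ0 hγd hcc hss (yGen k q d) = _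
      rw [pow_one, pow_zero, mul_one, hZPow_eq_up, F1_y]
end

section
/- Let k be a field, q ∈ k*, d, t ≥ 1. The Hayashi-type algebra H generated by Ω^{±1}, Ψ, Ψ† with ΨΩ = qΩΨ, Ψ†Ω = q^{-1}ΩΨ†, ΨΨ† = (q^tΩ^t − q^{-t}Ω^{-t})/(q^t − q^{-t}), Ψ†Ψ = (Ω^t − Ω^{-t})/(q^t − q^{-t}) (assuming q^{2t} ≠ 1) is isomorphic as k-algebra to the generalized Weyl algebra k[h^{±1}](σ, c(h^{2t} − 1)h^{-t}) for a suitable scalar c, via Ω ↦ h, Ψ ↦ x, Ψ† ↦ y; in particular H ≅ A(2t, q) in the notation where A(d,q) = k[h^{±1}](σ, h^d − 1) up to unit rescaling of the defining element. -/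
private lemma aux_pow_mul_pow {A : Type*} [Monoid A] {u v : A}
    (h1 : u * v = 1) (h2 : v * u = 1) : ∀ n : ℕ, u ^ n * v ^ n = 1
  | 0 => by simp
  | n+1 => by
    rw [pow_succ, pow_succ', mul_assoc, ← mul_assoc u v, h1, one_mul,
      aux_pow_mul_pow h1 h2 n]

private lemma key_xy {k : Type*} [Field k] (q : k) (t : ℕ) (hq0 : q ≠ 0)
    {A : Type*} [Ring A] [Algebra k A] {H0 H1 : A}
    (h1 : H0 * H1 = 1) (h2 : H1 * H0 = 1) :
    (((q ^ t - (q ^ (-(t : ℤ)) : k))⁻¹ * (q ^ (-(t : ℤ)) : k)) •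
        ((q ^ (2 * t) • H0 ^ (2 * t) - 1) * H1 ^ t))
      = (q ^ t - (q ^ (-(t : ℤ)) : k))⁻¹ •
          (q ^ t • H0 ^ t - (q ^ (-(t : ℤ)) : k) • H1 ^ t) := by
  have h3 : H0 ^ (2 * t) * H1 ^ t = H0 ^ t := by
    rw [two_mul, pow_add, mul_assoc, aux_pow_mul_pow h1 h2 t, mul_one]
  have hq' : (q ^ (-(t : ℤ)) : k) * q ^ (2 * t) = q ^ t := by
    rw [zpow_neg, zpow_natCast, two_mul, pow_add]
    field_simp
  rw [sub_mul, one_mul, smul_mul_assoc, h3, smul_sub, smul_sub,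
    smul_smul, smul_smul, smul_smul]
  congr 2
  rw [mul_assoc, hq']

private lemma key_yx {k : Type*} [Field k] (q : k) (t : ℕ)
    {A : Type*} [Ring A] [Algebra k A] {H0 H1 : A}
    (h1 : H0 * H1 = 1) (h2 : H1 * H0 = 1) :
    ((q ^ t - (q ^ (-(t : ℤ)) : k))⁻¹ • ((H0 ^ (2 * t) - 1) * H1 ^ t))
      = (q ^ t - (q ^ (-(t : ℤ)) : k))⁻¹ • (H0 ^ t - H1 ^ t) := by
  have h3 : H0 ^ (2 * t) * H1 ^ t = H0 ^ t := by
    rw [two_mul, pow_add, mul_assoc, aux_pow_mul_pow h1 h2 t, mul_one]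
  rw [sub_mul, one_mul, h3]

inductive HayashiRel (k : Type*) [Field k] (q : k) (t : ℕ) :
    FreeAlgebra k (Fin 4) → FreeAlgebra k (Fin 4) → Prop
  | oo : HayashiRel k q t (FreeAlgebra.ι k 0 * FreeAlgebra.ι k 1) 1
  | oo' : HayashiRel k q t (FreeAlgebra.ι k 1 * FreeAlgebra.ι k 0) 1
  | po : HayashiRel k q t (FreeAlgebra.ι k 2 * FreeAlgebra.ι k 0)
      (q • (FreeAlgebra.ι k 0 * FreeAlgebra.ι k 2))
  | do' : HayashiRel k q t (FreeAlgebra.ι k 3 * FreeAlgebra.ι k 0)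
      (q⁻¹ • (FreeAlgebra.ι k 0 * FreeAlgebra.ι k 3))
  | pd : HayashiRel k q t (FreeAlgebra.ι k 2 * FreeAlgebra.ι k 3)
      ((q ^ t - (q ^ (-(t : ℤ)) : k))⁻¹ •
        (q ^ t • FreeAlgebra.ι k 0 ^ t - (q ^ (-(t : ℤ)) : k) • FreeAlgebra.ι k 1 ^ t))
  | dp : HayashiRel k q t (FreeAlgebra.ι k 3 * FreeAlgebra.ι k 2)
      ((q ^ t - (q ^ (-(t : ℤ)) : k))⁻¹ •
        (FreeAlgebra.ι k 0 ^ t - FreeAlgebra.ι k 1 ^ t))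

/-- The Hayashi-type algebra `H`. -/
abbrev Hayashi (k : Type*) [Field k] (q : k) (t : ℕ) := RingQuot (HayashiRel k q t)

/-- Relations of the generalized Weyl algebra `k[h^{±1}](σ, a)` with `σ(h) = qh`
and `a = c (h^{2t} − 1) h^{-t}`, `c = (q^t − q^{-t})⁻¹`: generators `h = ι 0`,
`h⁻¹ = ι 1`, `x = ι 2`, `y = ι 3`; the relations `xy = σ(a)`, `yx = a` read
`xy = c q^{-t} ((q^{2t} h^{2t} − 1) h^{-t})`, `yx = c ((h^{2t} − 1) h^{-t})`. -/
inductive GWARel' (k : Type*) [Field k] (q : k) (t : ℕ) :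
    FreeAlgebra k (Fin 4) → FreeAlgebra k (Fin 4) → Prop
  | hh : GWARel' k q t (FreeAlgebra.ι k 0 * FreeAlgebra.ι k 1) 1
  | hh' : GWARel' k q t (FreeAlgebra.ι k 1 * FreeAlgebra.ι k 0) 1
  | xh : GWARel' k q t (FreeAlgebra.ι k 2 * FreeAlgebra.ι k 0)
      (q • (FreeAlgebra.ι k 0 * FreeAlgebra.ι k 2))
  | yh : GWARel' k q t (FreeAlgebra.ι k 3 * FreeAlgebra.ι k 0)
      (q⁻¹ • (FreeAlgebra.ι k 0 * FreeAlgebra.ι k 3))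
  | xy : GWARel' k q t (FreeAlgebra.ι k 2 * FreeAlgebra.ι k 3)
      (((q ^ t - (q ^ (-(t : ℤ)) : k))⁻¹ * (q ^ (-(t : ℤ)) : k)) •
        ((q ^ (2 * t) • FreeAlgebra.ι k 0 ^ (2 * t) - 1) * FreeAlgebra.ι k 1 ^ t))
  | yx : GWARel' k q t (FreeAlgebra.ι k 3 * FreeAlgebra.ι k 2)
      ((q ^ t - (q ^ (-(t : ℤ)) : k))⁻¹ •
        ((FreeAlgebra.ι k 0 ^ (2 * t) - 1) * FreeAlgebra.ι k 1 ^ t))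

/-- The generalized Weyl algebra `k[h^{±1}](σ, c (h^{2t} − 1) h^{-t})`. -/
abbrev GWA' (k : Type*) [Field k] (q : k) (t : ℕ) := RingQuot (GWARel' k q t)


private lemma rel_HtoG {k : Type*} [Field k] (q : k) (t : ℕ) (hq0 : q ≠ 0) :
    ∀ ⦃a b⦄, HayashiRel k q t a b →
      RingQuot.mkAlgHom k (GWARel' k q t) a = RingQuot.mkAlgHom k (GWARel' k q t) b := by
  intro a b h
  set F := RingQuot.mkAlgHom k (GWARel' k q t) with hF
  have h1 : F (FreeAlgebra.ι k 0) * F (FreeAlgebra.ι k 1) = 1 := by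
    rw [← map_mul, RingQuot.mkAlgHom_rel k GWARel'.hh, map_one]
  have h2 : F (FreeAlgebra.ι k 1) * F (FreeAlgebra.ι k 0) = 1 := by
    rw [← map_mul, RingQuot.mkAlgHom_rel k GWARel'.hh', map_one]
  induction h with
  | oo => exact RingQuot.mkAlgHom_rel k GWARel'.hh
  | oo' => exact RingQuot.mkAlgHom_rel k GWARel'.hh'
  | po => exact RingQuot.mkAlgHom_rel k GWARel'.xh
  | do' => exact RingQuot.mkAlgHom_rel k GWARel'.yh
  | pd =>
    rw [RingQuot.mkAlgHom_rel k GWARel'.xy]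
    simp only [map_smul, map_sub, map_mul, map_pow, map_one]
    exact key_xy q t hq0 h1 h2
  | dp =>
    rw [RingQuot.mkAlgHom_rel k GWARel'.yx]
    simp only [map_smul, map_sub, map_mul, map_pow, map_one]
    exact key_yx q t h1 h2

private lemma rel_GtoH {k : Type*} [Field k] (q : k) (t : ℕ) (hq0 : q ≠ 0) :
    ∀ ⦃a b⦄, GWARel' k q t a b →
      RingQuot.mkAlgHom k (HayashiRel k q t) a = RingQuot.mkAlgHom k (HayashiRel k q t) b := by
  intro a b h
  set F := RingQuot.mkAlgHom k (HayashiRel k q t) with hF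
  have h1 : F (FreeAlgebra.ι k 0) * F (FreeAlgebra.ι k 1) = 1 := by
    rw [← map_mul, RingQuot.mkAlgHom_rel k HayashiRel.oo, map_one]
  have h2 : F (FreeAlgebra.ι k 1) * F (FreeAlgebra.ι k 0) = 1 := by
    rw [← map_mul, RingQuot.mkAlgHom_rel k HayashiRel.oo', map_one]
  induction h with
  | hh => exact RingQuot.mkAlgHom_rel k HayashiRel.oo
  | hh' => exact RingQuot.mkAlgHom_rel k HayashiRel.oo'
  | xh => exact RingQuot.mkAlgHom_rel k HayashiRel.po
  | yh => exact RingQuot.mkAlgHom_rel k HayashiRel.do'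
  | xy =>
    rw [RingQuot.mkAlgHom_rel k HayashiRel.pd]
    simp only [map_smul, map_sub, map_mul, map_pow, map_one]
    exact (key_xy q t hq0 h1 h2).symm
  | yx =>
    rw [RingQuot.mkAlgHom_rel k HayashiRel.dp]
    simp only [map_smul, map_sub, map_mul, map_pow, map_one]
    exact (key_yx q t h1 h2).symm

/-- for `q ∈ k*` with `q^{2t} ≠ 1`, the Hayashi-type algebra is
isomorphic to the generalized Weyl algebra `k[h^{±1}](σ, c (h^{2t} − 1) h^{-t})`
via `Ω ↦ h`, `Ψ ↦ x`, `Ψ† ↦ y`. -/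
theorem stmt17 (k : Type*) [Field k] (q : k) (t : ℕ) (ht : 1 ≤ t)
    (hq0 : q ≠ 0) (hq : q ^ (2 * t) ≠ 1) :
    ∃ e : Hayashi k q t ≃ₐ[k] GWA' k q t,
      e (RingQuot.mkAlgHom k (HayashiRel k q t) (FreeAlgebra.ι k 0))
        = RingQuot.mkAlgHom k (GWARel' k q t) (FreeAlgebra.ι k 0) ∧
      e (RingQuot.mkAlgHom k (HayashiRel k q t) (FreeAlgebra.ι k 1))
        = RingQuot.mkAlgHom k (GWARel' k q t) (FreeAlgebra.ι k 1) ∧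
      e (RingQuot.mkAlgHom k (HayashiRel k q t) (FreeAlgebra.ι k 2))
        = RingQuot.mkAlgHom k (GWARel' k q t) (FreeAlgebra.ι k 2) ∧
      e (RingQuot.mkAlgHom k (HayashiRel k q t) (FreeAlgebra.ι k 3))
        = RingQuot.mkAlgHom k (GWARel' k q t) (FreeAlgebra.ι k 3) := by
  let f : Hayashi k q t →ₐ[k] GWA' k q t :=
    RingQuot.liftAlgHom k ⟨RingQuot.mkAlgHom k (GWARel' k q t), rel_HtoG q t hq0⟩
  let g : GWA' k q t →ₐ[k] Hayashi k q t :=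
    RingQuot.liftAlgHom k ⟨RingQuot.mkAlgHom k (HayashiRel k q t), rel_GtoH q t hq0⟩
  have hfg : f.comp g = AlgHom.id k (GWA' k q t) := by
    apply RingQuot.ringQuot_ext'
    ext i
    simp [f, g, RingQuot.liftAlgHom_mkAlgHom_apply]
  have hgf : g.comp f = AlgHom.id k (Hayashi k q t) := by
    apply RingQuot.ringQuot_ext'
    ext i
    simp [f, g, RingQuot.liftAlgHom_mkAlgHom_apply]
  refine ⟨AlgEquiv.ofAlgHom f g hfg hgf, ?_, ?_, ?_, ?_⟩ <;>
    simp [f, AlgEquiv.ofAlgHom_apply, RingQuot.liftAlgHom_mkAlgHom_apply]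
end
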